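/- arXiv:1502.00422 — 4 statements merged into one kernel-verified Lean document; each statement's English description precedes it below -/
import Mathlib

section
/- Let F be a set and let p, q ≥ 1 be integers. Let 𝔛 be a finite set of p-tuples of elements of F, and let |𝔛| ⊆ F denote the set of all elements of F that occur as a component of some member of 𝔛. If #|𝔛| > p(q−1), then there exist members 𝐱₁, …, 𝐱_q ∈ 𝔛 and indices i(1), …, i(q) ∈ {1,…,p} such that for every 1 ≤ j ≤ q the component 𝐱_j(i(j)) does not occur as a component of 𝐱_{j′} for any j′ < j; that is, the array (𝐱₁,…,𝐱_q) is independent. -/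
theorem stmt7_aux {F : Type*} [DecidableEq F] (p : ℕ) (𝔛 : Finset (Fin p → F)) :
    ∀ n : ℕ, p * n < (𝔛.biUnion fun x => Finset.image x Finset.univ).card →
    ∃ (x : Fin (n+1) → Fin p → F) (ind : Fin (n+1) → Fin p),
      (∀ j, x j ∈ 𝔛) ∧
        ∀ j j' : Fin (n+1), j' < j → ∀ i' : Fin p, x j' i' ≠ x j (ind j) := by
  intro n
  induction n with
  | zero =>
    intro h
    have hne : (𝔛.biUnion fun x => Finset.image x Finset.univ).Nonempty :=
      Finset.card_pos.mp (by omega)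
    obtain ⟨c, hc⟩ := hne
    simp only [Finset.mem_biUnion, Finset.mem_image, Finset.mem_univ, true_and] at hc
    obtain ⟨y, hy, i, rfl⟩ := hc
    refine ⟨fun _ => y, fun _ => i, fun _ => hy, fun j j' hlt => ?_⟩
    exact absurd hlt (by omega)
  | succ n ih =>
    intro h
    obtain ⟨x, ind, hmem, hind⟩ := ih
      (lt_of_le_of_lt (Nat.mul_le_mul_left _ (Nat.le_succ n)) h)
    set T : Finset F := Finset.univ.biUnion
      (fun j : Fin (n+1) => Finset.image (x j) Finset.univ) with hT
    have hTcard : T.card < (𝔛.biUnion fun x => Finset.image x Finset.univ).card := by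
      refine lt_of_le_of_lt ?_ h
      calc T.card ≤ ∑ j : Fin (n+1), (Finset.image (x j) Finset.univ).card :=
            Finset.card_biUnion_le
        _ ≤ ∑ _j : Fin (n+1), p := by
            refine Finset.sum_le_sum fun j _ => ?_
            exact le_trans Finset.card_image_le (by simp)
        _ = p * (n + 1) := by simp [Nat.mul_comm]
    have hnsub : ¬ (𝔛.biUnion fun x => Finset.image x Finset.univ) ⊆ T :=
      fun hsub => absurd (Finset.card_le_card hsub) (not_le.mpr hTcard)
    obtain ⟨c, hcS, hcT⟩ := Finset.not_subset.mp hnsub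
    simp only [Finset.mem_biUnion, Finset.mem_image, Finset.mem_univ, true_and] at hcS
    obtain ⟨y, hy, i, rfl⟩ := hcS
    have hcT' : ∀ (j : Fin (n+1)) (i' : Fin p), x j i' ≠ y i := by
      intro j i' hEq
      exact hcT (Finset.mem_biUnion.mpr ⟨j, Finset.mem_univ _,
        Finset.mem_image.mpr ⟨i', Finset.mem_univ _, hEq⟩⟩)
    refine ⟨Fin.snoc x y, Fin.snoc ind i, ?_, ?_⟩
    · intro j
      refine Fin.lastCases ?_ (fun k => ?_) j
      · simpa using hy
      · simpa using hmem k
    · intro j j'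
      refine Fin.lastCases ?_ (fun k => ?_) j <;> intro hlt i'
      · have hj' : j' ≠ Fin.last (n+1) := Fin.ne_last_of_lt hlt
        obtain ⟨k', rfl⟩ := Fin.exists_castSucc_eq.mpr hj'
        simpa using hcT' k' i'
      · have hj' : j' ≠ Fin.last (n+1) :=
          Fin.ne_last_of_lt (lt_of_lt_of_le hlt (Fin.le_last _))
        obtain ⟨k', rfl⟩ := Fin.exists_castSucc_eq.mpr hj'
        have hlt' : k' < k := by
          simpa [Fin.castSucc_lt_castSucc_iff] using hlt
        simpa using hind k k' hlt' i'

/-- Lemma `lm:findingS` of the paper: if a finite set `𝔛` of `p`-tuples of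
elements of `F` has more than `p(q-1)` elements of `F` occurring as components, then one can
select an *independent* (ordered) array `𝐱₁, …, 𝐱_q` of members of `𝔛`: for each `j` some
component `𝐱_j(i(j))` does not occur as a component of any earlier `𝐱_{j'}`, `j' < j`. -/
theorem stmt7 {F : Type*} [DecidableEq F] (p q : ℕ) (hp : 1 ≤ p) (hq : 1 ≤ q)
    (𝔛 : Finset (Fin p → F))
    (h : p * (q - 1) < (𝔛.biUnion fun x => Finset.image x Finset.univ).card) :
    ∃ (x : Fin q → Fin p → F) (ind : Fin q → Fin p),
      (∀ j, x j ∈ 𝔛) ∧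
        ∀ j j' : Fin q, j' < j → ∀ i' : Fin p, x j' i' ≠ x j (ind j) := by
  obtain ⟨n, rfl⟩ : ∃ n, q = n + 1 := ⟨q - 1, (Nat.succ_pred_eq_of_pos hq).symm⟩
  simp only [Nat.add_sub_cancel] at h
  exact stmt7_aux p 𝔛 n h
end

section
/- Let ℓ ≥ 2, p ≥ 1 and q ≥ 1 be integers. There exists n₀ ≥ 1 (depending only on ℓ, p, q) such that for every δ > 0 and every integer n ≥ n₀ there exist an integer K ≥ 1 and C^∞ functions g₁, …, g_K : S¹ → ℝ with the following property. For every x ∈ S¹ ∖ Per_δ(τ,n), every integer m ≥ 1, and every array (𝐱̃₁, …, 𝐱̃_q) of q elements of (τ^{−mn}(x))^p such that the array (𝐱₁,…,𝐱_q) with 𝐱_j = (τ^{(m−1)n}(𝐱̃_j(1)), …, τ^{(m−1)n}(𝐱̃_j(p))) ∈ (τ^{−n}(x))^p is independent, there exist indices k(1), …, k(q) ∈ {1,…,K} such that the q×q real matrix whose (j, j′) entry is ℓ^{−mn} ∑_{i=1}^p (g_{k(j′)}^{(mn)})′(𝐱̃_j(i)) has determinant ≥ 1. (This matrix entry equals ∂Ŝ(𝐱̃_j,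 mn; f_𝐬)/∂s_{k(j′)}, which is independent of f and 𝐬.) -/
noncomputable section
open MeasureTheory

/-- The circle `S¹ = ℝ/ℤ`. -/
abbrev S1 : Type := AddCircle (1 : ℝ)

/-- The angle-multiplying map `τ(x) = ℓx mod ℤ`. -/
def tauC (ℓ : ℕ) : S1 → S1 := fun x => ℓ • x

/-- The Birkhoff sum `f^{(n)}(x) = ∑_{i=0}^{n-1} f(τ^i x)`. -/
def birkC (ℓ : ℕ) (f : S1 → ℝ) (n : ℕ) (x : S1) : ℝ :=
  ∑ i ∈ Finset.range n, f ((tauC ℓ)^[i] x)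

/-- The derivative of a function on the circle, computed via its periodic lift at the canonical
representative in `[0,1)`. -/
def circDeriv (g : S1 → ℝ) (x : S1) : ℝ :=
  deriv (fun t : ℝ => g (t : S1)) ((AddCircle.equivIco 1 0 x : ℝ))

/-- `n(x,t;f) = max{n ≥ 0 : f^{(n)}(x) ≤ t}`. -/
def nOf (ℓ : ℕ) (f : S1 → ℝ) (x : S1) (t : ℝ) : ℕ := sSup {n : ℕ | birkC ℓ f n x ≤ t}

/-- The phase space `X_f = {(x,y) : 0 ≤ y < f(x)}` of the suspension semiflow. -/
def Xf (ℓ : ℕ) (f : S1 → ℝ) : Set (S1 × ℝ) := {z | 0 ≤ z.2 ∧ z.2 < f z.1}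

/-- The time-`t` map of the suspension semiflow of `τ` with roof function `f`. -/
def Tf (ℓ : ℕ) (f : S1 → ℝ) (t : ℝ) (z : S1 × ℝ) : S1 × ℝ :=
  ((tauC ℓ)^[nOf ℓ f z.1 (z.2 + t)] z.1,
    z.2 + t - birkC ℓ f (nOf ℓ f z.1 (z.2 + t)) z.1)

/-- The set of periodic points of `τ` with period `≤ n`. -/
def PerSet (ℓ n : ℕ) : Set S1 := {x | ∃ k, 1 ≤ k ∧ k ≤ n ∧ (tauC ℓ)^[k] x = x}

/-- The open `δ`-neighborhood of `Per(τ,n)`. -/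
def PerNbhd (ℓ n : ℕ) (δ : ℝ) : Set S1 := {x | ∃ y ∈ PerSet ℓ n, dist x y < δ}


open Function Real

namespace Stmt8Aux

/-- periodic plateau bump -/
def psi (ε c t : ℝ) : ℝ :=
  Real.smoothTransition ((Real.cos (2*π*(t-c)) - Real.cos (2*π*(2*ε))) /
    (Real.cos (2*π*ε) - Real.cos (2*π*(2*ε))))

variable {ε c t : ℝ}

lemma denom_pos (hε : 0 < ε) (hε8 : ε ≤ 1/8) :
    0 < Real.cos (2*π*ε) - Real.cos (2*π*(2*ε)) := by
  have hπ := Real.pi_pos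
  have h1 : (0:ℝ) ≤ 2*π*ε := by positivity
  have h2 : 2*π*(2*ε) ≤ π := by nlinarith
  have := Real.cos_lt_cos_of_nonneg_of_le_pi h1 h2 (by nlinarith)
  linarith

lemma psi_contDiff (hε : 0 < ε) (hε8 : ε ≤ 1/8) : ContDiff ℝ (⊤ : ℕ∞) (psi ε c) := by
  apply Real.smoothTransition.contDiff.comp
  apply ContDiff.div_const
  apply ContDiff.sub _ contDiff_const
  exact Real.contDiff_cos.comp (by fun_prop)

lemma psi_periodic : Function.Periodic (psi ε c) 1 := by
  intro t
  unfold psi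
  congr 2
  have : 2*π*(t+1-c) = 2*π*(t-c) + (1:ℤ) * (2*π) := by push_cast; ring
  rw [this, Real.cos_add_int_mul_two_pi]

lemma psi_nonneg : 0 ≤ psi ε c t := Real.smoothTransition.nonneg _
lemma psi_le_one : psi ε c t ≤ 1 := Real.smoothTransition.le_one _

lemma psi_eq_one (hε : 0 < ε) (hε8 : ε ≤ 1/8) (h : ∃ m : ℤ, |t - c - m| ≤ ε) :
    psi ε c t = 1 := by
  obtain ⟨m, hm⟩ := h
  apply Real.smoothTransition.one_of_one_le
  rw [le_div_iff₀ (denom_pos hε hε8)]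
  have hπ := Real.pi_pos
  have hcos : Real.cos (2*π*ε) ≤ Real.cos (2*π*(t-c)) := by
    have : (2*π*(t-c)) = 2*π*(t-c-m) + m * (2*π) := by ring
    rw [this, Real.cos_add_int_mul_two_pi]
    conv_rhs => rw [← Real.cos_abs]
    have habs : |2*π*(t-c-m)| ≤ 2*π*ε := by
      rw [abs_mul, abs_of_pos (by positivity : (0:ℝ) < 2*π)]
      nlinarith [abs_nonneg (t-c-m)]
    exact Real.cos_le_cos_of_nonneg_of_le_pi (abs_nonneg _) (by nlinarith) habs
  linarith

lemma psi_support (hε : 0 < ε) (hε8 : ε ≤ 1/8) (h : psi ε c t ≠ 0) :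
    ∃ m : ℤ, |t - c - m| < 2*ε := by
  have hπ := Real.pi_pos
  have harg : 0 < (Real.cos (2*π*(t-c)) - Real.cos (2*π*(2*ε))) /
      (Real.cos (2*π*ε) - Real.cos (2*π*(2*ε))) := by
    by_contra hle
    exact h (Real.smoothTransition.zero_of_nonpos (not_lt.1 hle))
  have hcos : Real.cos (2*π*(2*ε)) < Real.cos (2*π*(t-c)) := by
    have := (div_pos_iff.1 harg)
    rcases this with ⟨h1, _⟩ | ⟨_, h2⟩
    · linarith
    · exact absurd (denom_pos hε hε8) (by linarith)
  refine ⟨round (t - c), ?_⟩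
  by_contra hge
  push_neg at hge
  have hhalf : |t - c - round (t-c)| ≤ 1/2 := abs_sub_round (t-c)
  have : Real.cos (2*π*(t-c)) ≤ Real.cos (2*π*(2*ε)) := by
    have heq : (2*π*(t-c)) = 2*π*(t-c-round (t-c)) + (round (t-c)) * (2*π) := by ring
    rw [heq, Real.cos_add_int_mul_two_pi]
    conv_lhs => rw [← Real.cos_abs]
    apply Real.cos_le_cos_of_nonneg_of_le_pi (by positivity)
    · rw [abs_mul, abs_of_pos (by positivity : (0:ℝ) < 2*π)]
      nlinarith
    · rw [abs_mul, abs_of_pos (by positivity : (0:ℝ) < 2*π)]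
      nlinarith
  linarith


def kap (ε c : ℝ) : ℝ := ∫ s in (0:ℝ)..1, psi ε c s
def PsiInt (ε c t : ℝ) : ℝ := ∫ s in (0:ℝ)..t, psi ε c s
def Gfun (A ε c t : ℝ) : ℝ := A * PsiInt ε c t - A * kap ε c * t

variable {A ε c t : ℝ}

lemma psi_cont (hε : 0 < ε) (hε8 : ε ≤ 1/8) : Continuous (psi ε c) :=
  (psi_contDiff hε hε8).continuous

lemma PsiInt_hasDerivAt (hε : 0 < ε) (hε8 : ε ≤ 1/8) (t : ℝ) :
    HasDerivAt (PsiInt ε c) (psi ε c t) t := by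
  apply intervalIntegral.integral_hasDerivAt_right
    ((psi_cont hε hε8).intervalIntegrable _ _)
    ((psi_cont hε hε8).aestronglyMeasurable.stronglyMeasurableAtFilter)
    (psi_cont hε hε8).continuousAt

lemma Gfun_hasDerivAt (hε : 0 < ε) (hε8 : ε ≤ 1/8) (t : ℝ) :
    HasDerivAt (Gfun A ε c) (A * psi ε c t - A * kap ε c) t := by
  have h1 := ((PsiInt_hasDerivAt (c := c) hε hε8 t).const_mul A)
  have h2 : HasDerivAt (fun t : ℝ => A * kap ε c * t) (A * kap ε c) t := by
    simpa using (hasDerivAt_id t).const_mul (A * kap ε c)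
  exact h1.sub h2

lemma Gfun_contDiff (hε : 0 < ε) (hε8 : ε ≤ 1/8) : ContDiff ℝ (⊤ : ℕ∞) (Gfun A ε c) := by
  rw [contDiff_infty_iff_deriv]
  constructor
  · exact fun t => (Gfun_hasDerivAt hε hε8 t).differentiableAt
  · have : deriv (Gfun A ε c) = fun t => A * psi ε c t - A * kap ε c := by
      funext t; exact (Gfun_hasDerivAt hε hε8 t).deriv
    rw [this]
    exact (contDiff_const.mul (psi_contDiff hε hε8)).sub contDiff_const

lemma Gfun_periodic (hε : 0 < ε) (hε8 : ε ≤ 1/8) : Function.Periodic (Gfun A ε c) 1 := by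
  intro t
  have hint : ∀ a b : ℝ, IntervalIntegrable (psi ε c) volume a b :=
    fun a b => (psi_cont hε hε8).intervalIntegrable a b
  have h1 : PsiInt ε c (t+1) = PsiInt ε c t + ∫ s in t..(t+1), psi ε c s := by
    unfold PsiInt
    rw [intervalIntegral.integral_add_adjacent_intervals (hint 0 t) (hint t (t+1))]
  have h2 : (∫ s in t..(t+1), psi ε c s) = kap ε c := by
    have := (psi_periodic (ε := ε) (c := c)).intervalIntegral_add_eq t 0
    rw [kap]; rw [this]; norm_num
  simp only [Gfun, h1, h2]
  ring

lemma kap_nonneg (hε : 0 < ε) (hε8 : ε ≤ 1/8) : 0 ≤ kap ε c := by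
  apply intervalIntegral.integral_nonneg (by norm_num)
  exact fun s _ => psi_nonneg


lemma psi_zero_far (hε : 0 < ε) (hε8 : ε ≤ 1/8) (h : ∀ m : ℤ, 2*ε ≤ |t - c - m|) :
    psi ε c t = 0 := by
  by_contra hne
  obtain ⟨m, hm⟩ := psi_support hε hε8 hne
  exact absurd hm (not_lt.2 (h m))

lemma kap_le (hε : 0 < ε) (hε8 : ε ≤ 1/8) : kap ε c ≤ 4*ε := by
  have hint : ∀ a b : ℝ, IntervalIntegrable (psi ε c) volume a b :=
    fun a b => (psi_cont hε hε8).intervalIntegrable a b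
  have hper : kap ε c = ∫ s in (c-1/2)..(c+1/2), psi ε c s := by
    have := (psi_periodic (ε := ε) (c := c)).intervalIntegral_add_eq 0 (c-1/2)
    rw [kap]
    rw [show (0:ℝ)+1 = 1 by norm_num, show c-1/2+1 = c+1/2 by ring] at this
    exact this
  have hsplit : (∫ s in (c-1/2)..(c+1/2), psi ε c s) =
      (∫ s in (c-1/2)..(c-2*ε), psi ε c s) + (∫ s in (c-2*ε)..(c+2*ε), psi ε c s)
        + (∫ s in (c+2*ε)..(c+1/2), psi ε c s) := by
    rw [intervalIntegral.integral_add_adjacent_intervals (hint _ _) (hint _ _),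
      intervalIntegral.integral_add_adjacent_intervals (hint _ _) (hint _ _)]
  have hz : ∀ t' ∈ Set.uIcc (c-1/2) (c-2*ε), psi ε c t' = 0 := by
    intro t' ht'
    rw [Set.uIcc_of_le (by linarith)] at ht'
    apply psi_zero_far hε hε8
    intro m
    rcases ht' with ⟨h1, h2⟩
    rcases eq_or_ne m 0 with hm0 | hm0
    · subst hm0
      rw [Int.cast_zero, sub_zero]
      rcases abs_cases (t' - c) with ⟨h,h'⟩|⟨h,h'⟩ <;> rw [h] <;> linarith
    · have h1m : (1:ℝ) ≤ |(m:ℝ)| := by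
        rw [← Int.cast_abs]
        exact_mod_cast Int.one_le_abs hm0
      have hd : |t' - c| ≤ 1/2 := by
        rw [abs_le]; constructor <;> linarith
      have := abs_sub_abs_le_abs_sub ((m:ℝ)) (t' - c)
      have h3 : |(m:ℝ) - (t' - c)| = |t' - c - m| := by rw [abs_sub_comm]
      linarith
  have hz2 : ∀ t' ∈ Set.uIcc (c+2*ε) (c+1/2), psi ε c t' = 0 := by
    intro t' ht'
    rw [Set.uIcc_of_le (by linarith)] at ht'
    apply psi_zero_far hε hε8
    intro m
    rcases ht' with ⟨h1, h2⟩
    rcases eq_or_ne m 0 with hm0 | hm0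
    · subst hm0
      rw [Int.cast_zero, sub_zero]
      rcases abs_cases (t' - c) with ⟨h,h'⟩|⟨h,h'⟩ <;> rw [h] <;> linarith
    · have h1m : (1:ℝ) ≤ |(m:ℝ)| := by
        rw [← Int.cast_abs]
        exact_mod_cast Int.one_le_abs hm0
      have hd : |t' - c| ≤ 1/2 := by
        rw [abs_le]; constructor <;> linarith
      have := abs_sub_abs_le_abs_sub ((m:ℝ)) (t' - c)
      have h3 : |(m:ℝ) - (t' - c)| = |t' - c - m| := by rw [abs_sub_comm]
      linarith
  have e1 : (∫ s in (c-1/2)..(c-2*ε), psi ε c s) = 0 := by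
    rw [intervalIntegral.integral_congr hz]
    simp
  have e3 : (∫ s in (c+2*ε)..(c+1/2), psi ε c s) = 0 := by
    rw [intervalIntegral.integral_congr hz2]
    simp
  have e2 : (∫ s in (c-2*ε)..(c+2*ε), psi ε c s) ≤ 4*ε := by
    have hb : (∫ s in (c-2*ε)..(c+2*ε), (1:ℝ)) = 4*ε := by
      simp; ring
    rw [← hb]
    apply intervalIntegral.integral_mono_on (by linarith) (hint _ _)
      (intervalIntegrable_const)
    exact fun s _ => psi_le_one
  rw [hper, hsplit, e1, e3]
  linarith


lemma coe_smul (ℓ : ℕ) (a : ℝ) : (ℓ • (a : S1)) = ((ℓ * a : ℝ) : S1) := by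
  rw [← QuotientAddGroup.mk_nsmul]
  norm_num [nsmul_eq_mul]

lemma tau_iter_coe (ℓ : ℕ) (r : ℕ) (a : ℝ) :
    (tauC ℓ)^[r] (a : S1) = (((ℓ : ℝ)^r * a : ℝ) : S1) := by
  induction r with
  | zero => simp
  | succ r ih =>
      rw [Function.iterate_succ_apply', ih]
      show (ℓ • _) = _
      rw [coe_smul]
      congr 1
      ring

lemma coe_eq_coe {a b : ℝ} : (a : S1) = (b : S1) ↔ ∃ k : ℤ, a - b = k := by
  rw [QuotientAddGroup.eq_iff_sub_mem, AddSubgroup.mem_zmultiples_iff]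
  constructor
  · rintro ⟨k, hk⟩; exact ⟨k, by simpa using hk.symm⟩
  · rintro ⟨k, hk⟩; exact ⟨k, by simp [hk.symm]⟩

lemma coe_repr (z : S1) : (((AddCircle.equivIco 1 0 z : ℝ)) : S1) = z :=
  (AddCircle.equivIco 1 0).symm_apply_apply z

lemma dist_coe_le (a b : ℝ) : dist (a : S1) (b : S1) ≤ |a - b| := by
  have : (a : S1) - (b : S1) = ((a - b : ℝ) : S1) := by
    rfl
  rw [dist_eq_norm, this, AddCircle.norm_eq]
  simp only [inv_one, one_mul, mul_one]
  simpa using round_le (a - b) 0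

/-- If some `ℓ^k`-preimage-translate of `v` is close to `v`, then `v` is near a
periodic point of period `k`. -/
lemma per_near (ℓ n : ℕ) (hℓ : 2 ≤ ℓ) (δ : ℝ) (v : ℝ)
    (hv : (v : S1) ∉ PerNbhd ℓ n δ) (ρ : ℝ) (hρ : 0 < ρ) (hρδ : 2 * ρ ≤ δ)
    (k : ℕ) (hk1 : 1 ≤ k) (hkn : k ≤ n) (P : ℝ) (J : ℤ)
    (hP : (ℓ : ℝ)^k * P - v = J) (hclose : |P - v| < ρ) : False := by
  apply hv
  have hℓk : (2:ℝ) ≤ (ℓ:ℝ)^k := by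
    calc (2:ℝ) = 2^1 := by norm_num
    _ ≤ (2:ℝ)^k := by apply pow_le_pow_right₀ <;> norm_num [hk1]
    _ ≤ (ℓ:ℝ)^k := by apply pow_le_pow_left₀ <;> norm_num; exact_mod_cast hℓ
  set y : ℝ := (J : ℝ) / ((ℓ:ℝ)^k - 1) with hy
  refine ⟨(y : S1), ⟨k, hk1, hkn, ?_⟩, ?_⟩
  · rw [tau_iter_coe, coe_eq_coe]
    refine ⟨J, ?_⟩
    have h0 : ((ℓ:ℝ)^k - 1) ≠ 0 := by linarith
    have hyJ : y * ((ℓ:ℝ)^k - 1) = J := by rw [hy]; exact div_mul_cancel₀ _ h0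
    linear_combination hyJ
  · calc dist (v : S1) (y : S1) ≤ |v - y| := dist_coe_le v y
    _ = ((ℓ:ℝ)^k * |P - v|) / ((ℓ:ℝ)^k - 1) := by
        have h0 : (0:ℝ) < (ℓ:ℝ)^k - 1 := by linarith
        have hval : v - y = ((ℓ:ℝ)^k * (v - P)) / ((ℓ:ℝ)^k - 1) := by
          rw [hy, ← hP]
          field_simp
          ring
        rw [hval, abs_div, abs_mul, abs_of_pos h0,
          abs_of_pos (show (0:ℝ) < (ℓ:ℝ)^k by linarith), abs_sub_comm v P]
    _ < ((ℓ:ℝ)^k * ρ) / ((ℓ:ℝ)^k - 1) := by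
        rw [div_lt_div_iff_of_pos_right (by linarith)]
        exact (mul_lt_mul_iff_right₀ (by linarith)).2 hclose
    _ ≤ 2 * ρ := by
        rw [div_le_iff₀ (by linarith)]
        nlinarith
    _ ≤ δ := hρδ


lemma birk_coe (ℓ : ℕ) (G : ℝ → ℝ) (hper : Function.Periodic G 1) (N : ℕ) (t : ℝ) :
    birkC ℓ (hper.lift) N (t : S1) = ∑ r ∈ Finset.range N, G ((ℓ:ℝ)^r * t) := by
  unfold birkC
  apply Finset.sum_congr rfl
  intro r _
  rw [tau_iter_coe, hper.lift_coe]

lemma circDeriv_birk (ℓ : ℕ) (G H : ℝ → ℝ) (hper : Function.Periodic G 1)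
    (hd : ∀ t, HasDerivAt G (H t) t) (N : ℕ) (z : S1) :
    circDeriv (birkC ℓ (hper.lift) N) z
      = ∑ r ∈ Finset.range N, (ℓ:ℝ)^r * H ((ℓ:ℝ)^r * (AddCircle.equivIco 1 0 z : ℝ)) := by
  unfold circDeriv
  set u : ℝ := (AddCircle.equivIco 1 0 z : ℝ)
  have heq : (fun t : ℝ => birkC ℓ (hper.lift) N (t : S1))
      = fun t => ∑ r ∈ Finset.range N, G ((ℓ:ℝ)^r * t) :=
    funext (birk_coe ℓ G hper N)
  rw [heq]
  apply HasDerivAt.deriv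
  apply HasDerivAt.fun_sum
  intro r _
  have h1 : HasDerivAt (fun t : ℝ => (ℓ:ℝ)^r * t) ((ℓ:ℝ)^r) u := by
    simpa using (hasDerivAt_id u).const_mul ((ℓ:ℝ)^r)
  have h2 := (hd ((ℓ:ℝ)^r * u)).comp u h1
  have h3 : (G ∘ fun t : ℝ => (ℓ:ℝ)^r * t) = fun t : ℝ => G ((ℓ:ℝ)^r * t) := rfl
  rw [h3] at h2
  simpa [mul_comm] using h2


lemma perm_exists_lt {q : ℕ} (σ : Equiv.Perm (Fin q)) (h : σ ≠ 1) : ∃ j, σ j < j := by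
  by_contra hc
  push_neg at hc
  apply h
  have hsum : ∑ j : Fin q, ((σ j : ℕ)) = ∑ j : Fin q, ((j : ℕ)) :=
    Equiv.sum_comp σ (fun j : Fin q => (j : ℕ))
  have hpt : ∀ j ∈ (Finset.univ : Finset (Fin q)), ((j : ℕ)) ≤ ((σ j : ℕ)) :=
    fun j _ => hc j
  have hall := (Finset.sum_eq_sum_iff_of_le hpt).1 hsum.symm
  ext j
  exact_mod_cast (hall j (Finset.mem_univ j)).symm

lemma det_lower {q : ℕ} (hq : 1 ≤ q) (M : Matrix (Fin q) (Fin q) ℝ) (B η : ℝ)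
    (hη0 : 0 ≤ η) (hB : η ≤ B)
    (hdiag : ∀ j, 2 ≤ M j j) (hall : ∀ j j', |M j j'| ≤ B)
    (hup : ∀ j j' : Fin q, j < j' → |M j j'| ≤ η) :
    2^q - (q.factorial : ℝ) * η * B^(q-1) ≤ M.det := by
  classical
  have hB0 : 0 ≤ B := le_trans hη0 hB
  rw [Matrix.det_apply]
  rw [← Finset.add_sum_erase _ _ (Finset.mem_univ (1 : Equiv.Perm (Fin q)))]
  have hid : (Equiv.Perm.sign (1 : Equiv.Perm (Fin q))) • ∏ i, M ((1 : Equiv.Perm (Fin q)) i) i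
      = ∏ i, M i i := by simp
  rw [hid]
  have hdiagprod : (2:ℝ)^q ≤ ∏ i, M i i := by
    calc (2:ℝ)^q = ∏ _i : Fin q, (2:ℝ) := by simp
    _ ≤ ∏ i, M i i := Finset.prod_le_prod (fun _ _ => by norm_num) (fun i _ => hdiag i)
  have hterm : ∀ σ ∈ Finset.univ.erase (1 : Equiv.Perm (Fin q)),
      |(Equiv.Perm.sign σ) • ∏ i, M (σ i) i| ≤ η * B^(q-1) := by
    intro σ hσ
    have hσ1 : σ ≠ 1 := (Finset.mem_erase.1 hσ).1
    obtain ⟨j0, hj0⟩ := perm_exists_lt σ hσ1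
    have habs : |(Equiv.Perm.sign σ) • ∏ i, M (σ i) i| = ∏ i, |M (σ i) i| := by
      rcases Int.units_eq_one_or (Equiv.Perm.sign σ) with hs | hs <;>
        rw [hs] <;> simp [Finset.abs_prod]
    rw [habs, ← Finset.mul_prod_erase _ _ (Finset.mem_univ j0)]
    have h1 : |M (σ j0) j0| ≤ η := hup _ _ hj0
    have h2 : ∏ i ∈ Finset.univ.erase j0, |M (σ i) i| ≤ B^(q-1) := by
      have h2a : ∏ i ∈ Finset.univ.erase j0, |M (σ i) i|
          ≤ ∏ _i ∈ Finset.univ.erase j0, B :=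
        Finset.prod_le_prod (fun _ _ => abs_nonneg _) (fun i _ => hall _ _)
      have h2b : (∏ _i ∈ Finset.univ.erase j0, B) = B^(q-1) := by
        rw [Finset.prod_const, Finset.card_erase_of_mem (Finset.mem_univ j0)]
        simp
      linarith
    exact mul_le_mul h1 h2 (Finset.prod_nonneg fun _ _ => abs_nonneg _) hη0
  have hcard : ((Finset.univ.erase (1 : Equiv.Perm (Fin q))).card : ℝ) ≤ (q.factorial : ℝ) := by
    have h1 : (Finset.univ.erase (1 : Equiv.Perm (Fin q))).card ≤
        (Finset.univ : Finset (Equiv.Perm (Fin q))).card := Finset.card_erase_le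
    have h2 : (Finset.univ : Finset (Equiv.Perm (Fin q))).card = q.factorial := by
      rw [Finset.card_univ, Fintype.card_perm, Fintype.card_fin]
    exact_mod_cast h2 ▸ h1
  have hsum : |∑ σ ∈ Finset.univ.erase (1 : Equiv.Perm (Fin q)),
      (Equiv.Perm.sign σ) • ∏ i, M (σ i) i| ≤ (q.factorial : ℝ) * (η * B^(q-1)) := by
    have s1 := Finset.abs_sum_le_sum_abs
      (fun σ : Equiv.Perm (Fin q) => (Equiv.Perm.sign σ) • ∏ i, M (σ i) i)
      (Finset.univ.erase (1 : Equiv.Perm (Fin q)))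
    have s2 := Finset.sum_le_sum hterm
    rw [Finset.sum_const, nsmul_eq_mul] at s2
    have s3 : ((Finset.univ.erase (1 : Equiv.Perm (Fin q))).card : ℝ) * (η * B^(q-1))
        ≤ (q.factorial : ℝ) * (η * B^(q-1)) :=
      mul_le_mul_of_nonneg_right hcard (by positivity)
    linarith
  have hneg := neg_abs_le (∑ σ ∈ Finset.univ.erase (1 : Equiv.Perm (Fin q)),
      (Equiv.Perm.sign σ) • ∏ i, M (σ i) i)
  have : (q.factorial : ℝ) * η * B^(q-1) = (q.factorial : ℝ) * (η * B^(q-1)) := by ring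
  linarith


section Inner
variable {ℓ n m : ℕ} {δ ε v w c u : ℝ}

/-- exclusion of preimages of intermediate levels near the bump -/
lemma level_exclusion (hℓ : 2 ≤ ℓ) (hn : 1 ≤ n) (hm : 1 ≤ m)
    (hε : 0 < ε) (hε8 : ε ≤ 1/8) (hεδ : 6 * (ℓ:ℝ)^n * ε ≤ δ)
    (hv : (v : S1) ∉ PerNbhd ℓ n δ)
    (hw : ∃ J : ℤ, (ℓ:ℝ)^n * w - v = J)
    (hc : ∃ m₁ : ℤ, |w - c - m₁| ≤ ε)
    (hu : ∃ J : ℤ, (ℓ:ℝ)^(m*n) * u - v = J)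
    (r : ℕ) (hr : r < m*n) (hr2 : m*n ≤ r + 2*n) (hrn : r ≠ (m-1)*n) :
    psi ε c ((ℓ:ℝ)^r * u) = 0 := by
  obtain ⟨Jw, hJw⟩ := hw
  obtain ⟨J₀, hJ₀⟩ := hu
  obtain ⟨m₁, hm₁⟩ := hc
  by_contra hne
  obtain ⟨m₂, hm₂⟩ := psi_support hε hε8 hne
  have hℓ1 : (1:ℝ) < (ℓ:ℝ) := by exact_mod_cast Nat.lt_of_lt_of_le one_lt_two hℓ
  set z : ℝ := (ℓ:ℝ)^r * u with hz
  set M : ℤ := m₂ - m₁ with hM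
  have hzw : |z - (w + M)| < 3*ε := by
    have heq : z - (w + M) = (z - c - m₂) - (w - c - m₁) := by push_cast [hM]; ring
    rw [heq]
    calc |(z - c - m₂) - (w - c - m₁)| ≤ |z - c - m₂| + |w - c - m₁| := abs_sub _ _
    _ < 3*ε := by linarith
  set s : ℕ := m*n - r with hs
  have hrs : r + s = m*n := by omega
  have hs1 : 1 ≤ s := by omega
  have hs2 : s ≤ 2*n := by omega
  have hmn1 : (m-1)*n = m*n - n := by rw [Nat.sub_one_mul]
  have hnN : n ≤ m*n := Nat.le_mul_of_pos_left n (by omega)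
  rw [hmn1] at hrn
  have hsn : s ≠ n := by omega
  have hρpos : (0:ℝ) < 3*(ℓ:ℝ)^n*ε := by positivity
  have hρδ : 2*(3*(ℓ:ℝ)^n*ε) ≤ δ := by linarith
  have hpow : (ℓ:ℝ)^s * z = v + J₀ := by
    rw [hz, ← mul_assoc, ← pow_add, Nat.add_comm s r, hrs]
    linarith [hJ₀]
  rcases Nat.lt_or_ge s n with hslt | hsge
  · -- s < n
    set k : ℕ := n - s with hk
    have hks : k + s = n := by omega
    have hk1 : 1 ≤ k := by omega
    have hkn : k ≤ n := by omega
    set P : ℝ := (ℓ:ℝ)^s * (w + M) - J₀ with hP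
    apply per_near ℓ n hℓ δ v hv (3*(ℓ:ℝ)^n*ε) hρpos hρδ k hk1 hkn P
      (Jw + ℓ^n * M - ℓ^k * J₀)
    · have hpow2 : (ℓ:ℝ)^k * (ℓ:ℝ)^s = (ℓ:ℝ)^n := by rw [← pow_add, hks]
      push_cast
      linear_combination (ℓ:ℝ)^k * hP + hJw + (w + (M:ℝ)) * hpow2
    · have hthis : P - v = (ℓ:ℝ)^s * ((w + M) - z) := by
        linear_combination hpow + hP
      rw [hthis, abs_mul, abs_of_pos (by positivity : (0:ℝ) < (ℓ:ℝ)^s), abs_sub_comm]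
      calc (ℓ:ℝ)^s * |z - (w + M)| < (ℓ:ℝ)^s * (3*ε) :=
            mul_lt_mul_of_pos_left hzw (by positivity)
      _ ≤ (ℓ:ℝ)^n * (3*ε) := by
            apply mul_le_mul_of_nonneg_right _ (by positivity)
            exact pow_le_pow_right₀ (le_of_lt hℓ1) (le_of_lt hslt)
      _ = 3*(ℓ:ℝ)^n*ε := by ring
  · -- s > n
    have hsgt : n < s := lt_of_le_of_ne hsge (Ne.symm hsn)
    set k : ℕ := s - n with hk
    have hks : k + n = s := by omega
    have hk1 : 1 ≤ k := by omega
    have hkn : k ≤ n := by omega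
    set P : ℝ := (ℓ:ℝ)^n * z - (Jw + ℓ^n * M) with hP
    apply per_near ℓ n hℓ δ v hv (3*(ℓ:ℝ)^n*ε) hρpos hρδ k hk1 hkn P
      (J₀ - ℓ^k * (Jw + ℓ^n * M))
    · have hpow3 : (ℓ:ℝ)^k * (ℓ:ℝ)^n = (ℓ:ℝ)^s := by rw [← pow_add, hks]
      push_cast
      linear_combination (ℓ:ℝ)^k * hP + hpow + z * hpow3
    · have hthis : P - v = (ℓ:ℝ)^n * (z - (w + M)) := by
        push_cast
        linear_combination hP + hJw
      rw [hthis, abs_mul, abs_of_pos (by positivity : (0:ℝ) < (ℓ:ℝ)^n)]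
      calc (ℓ:ℝ)^n * |z - (w + M)| < (ℓ:ℝ)^n * (3*ε) :=
            mul_lt_mul_of_pos_left hzw (by positivity)
      _ = 3*(ℓ:ℝ)^n*ε := by ring

/-- level-n: the bump value is the equality indicator -/
lemma level_n_value (hℓ : 2 ≤ ℓ) (hn : 1 ≤ n) (hm : 1 ≤ m)
    (hε : 0 < ε) (hε8 : ε ≤ 1/8) (hεn : 3*ε < ((ℓ:ℝ)^n)⁻¹)
    (hw : ∃ J : ℤ, (ℓ:ℝ)^n * w - v = J)
    (hc : ∃ m₁ : ℤ, |w - c - m₁| ≤ ε)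
    (hu : ∃ J : ℤ, (ℓ:ℝ)^(m*n) * u - v = J)
    (hB : Prop) (hBdef : hB ↔ ∃ N : ℤ, (ℓ:ℝ)^((m-1)*n) * u - w = N) :
    (hB → psi ε c ((ℓ:ℝ)^((m-1)*n) * u) = 1) ∧
    (¬ hB → psi ε c ((ℓ:ℝ)^((m-1)*n) * u) = 0) := by
  obtain ⟨Jw, hJw⟩ := hw
  obtain ⟨J₀, hJ₀⟩ := hu
  obtain ⟨m₁, hm₁⟩ := hc
  have hℓ1 : (1:ℝ) < (ℓ:ℝ) := by exact_mod_cast Nat.lt_of_lt_of_le one_lt_two hℓ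
  have hℓn : (0:ℝ) < (ℓ:ℝ)^n := by positivity
  set z : ℝ := (ℓ:ℝ)^((m-1)*n) * u with hz
  have hr0 : (m-1)*n + n = m*n := by
    have : (m-1)*n = m*n - n := by rw [Nat.sub_one_mul]
    have h2 : n ≤ m*n := Nat.le_mul_of_pos_left n (by omega)
    omega
  have hpown : (ℓ:ℝ)^n * z = v + J₀ := by
    rw [hz, ← mul_assoc, ← pow_add, Nat.add_comm n ((m-1)*n), hr0]
    linarith [hJ₀]
  constructor
  · intro hb
    obtain ⟨N, hN⟩ := hBdef.1 hb
    apply psi_eq_one hε hε8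
    refine ⟨N + m₁, ?_⟩
    have heq : z - c - (N + m₁ : ℤ) = (z - w - N) + (w - c - m₁) := by push_cast; ring
    rw [heq, hN]
    simpa using hm₁
  · intro hb
    by_contra hne
    obtain ⟨m₂, hm₂⟩ := psi_support hε hε8 hne
    set M : ℤ := m₂ - m₁ with hM
    have hzw : |z - w - M| < 3*ε := by
      have heq : z - w - M = (z - c - m₂) - (w - c - m₁) := by push_cast [hM]; ring
      rw [heq]
      calc |(z - c - m₂) - (w - c - m₁)| ≤ |z - c - m₂| + |w - c - m₁| := abs_sub _ _
      _ < 3*ε := by linarith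
    have hint : (ℓ:ℝ)^n * (z - w - M) = ((J₀ - Jw - ℓ^n * M : ℤ) : ℝ) := by
      push_cast
      linear_combination hpown - hJw
    have habs : |((J₀ - Jw - ℓ^n * M : ℤ) : ℝ)| < 1 := by
      rw [← hint, abs_mul, abs_of_pos hℓn]
      calc (ℓ:ℝ)^n * |z - w - M| < (ℓ:ℝ)^n * (3*ε) :=
            mul_lt_mul_of_pos_left hzw hℓn
      _ < (ℓ:ℝ)^n * ((ℓ:ℝ)^n)⁻¹ := mul_lt_mul_of_pos_left hεn hℓn
      _ = 1 := mul_inv_cancel₀ (ne_of_gt hℓn)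
    have hzero : (J₀ - Jw - ℓ^n * M : ℤ) = 0 := by
      have := abs_lt.1 habs
      have h1 : ((J₀ - Jw - ℓ^n * M : ℤ) : ℝ) = 0 ∨ 1 ≤ |((J₀ - Jw - ℓ^n * M : ℤ) : ℝ)| := by
        rcases eq_or_ne (J₀ - Jw - ℓ^n * M : ℤ) 0 with h | h
        · left; rw [h]; simp
        · right
          rw [← Int.cast_abs]
          exact_mod_cast Int.one_le_abs h
      rcases h1 with h | h
      · exact_mod_cast h
      · linarith
    apply hb
    rw [hBdef]
    refine ⟨M, ?_⟩
    have : (ℓ:ℝ)^n * (z - w - M) = 0 := by rw [hint, hzero]; simp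
    have h2 : z - w - M = 0 := by
      rcases mul_eq_zero.1 this with h | h
      · exact absurd h (ne_of_gt hℓn)
      · exact h
    linarith

end Inner

section Inner2
variable {ℓ n m : ℕ} {δ ε v w c u : ℝ}

lemma geom_le (hℓ : 2 ≤ ℓ) (R : ℕ) : ∑ r ∈ Finset.range R, (ℓ:ℝ)^r ≤ (ℓ:ℝ)^R := by
  have hℓ2 : (2:ℝ) ≤ (ℓ:ℝ) := by exact_mod_cast hℓ
  induction R with
  | zero => simp
  | succ R ih =>
      rw [Finset.sum_range_succ, pow_succ]
      have h1 : (0:ℝ) ≤ (ℓ:ℝ)^R := by positivity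
      nlinarith

lemma inner_est (hℓ : 2 ≤ ℓ) (hn : 1 ≤ n) (hm : 1 ≤ m)
    (hε : 0 < ε) (hε8 : ε ≤ 1/8) (hεδ : 6 * (ℓ:ℝ)^n * ε ≤ δ) (hεn : 3*ε < ((ℓ:ℝ)^n)⁻¹)
    (hv : (v : S1) ∉ PerNbhd ℓ n δ)
    (hw : ∃ J : ℤ, (ℓ:ℝ)^n * w - v = J)
    (hc : ∃ m₁ : ℤ, |w - c - m₁| ≤ ε)
    (hu : ∃ J : ℤ, (ℓ:ℝ)^(m*n) * u - v = J)
    (hB : Prop) (hBdef : hB ↔ ∃ N : ℤ, (ℓ:ℝ)^((m-1)*n) * u - w = N)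
    (b : ℝ) (hb1 : hB → b = 1) (hb0 : ¬ hB → b = 0) :
    |(∑ r ∈ Finset.range (m*n), (ℓ:ℝ)^r * ((ℓ:ℝ)^(m*n))⁻¹ *
        (3*(ℓ:ℝ)^n * psi ε c ((ℓ:ℝ)^r * u) - 3*(ℓ:ℝ)^n * kap ε c)) - 3*b|
      ≤ 3*((ℓ:ℝ)^n)⁻¹ + 12*(ℓ:ℝ)^n*ε := by
  classical
  have hℓ1 : (1:ℝ) < (ℓ:ℝ) := by exact_mod_cast Nat.lt_of_lt_of_le one_lt_two hℓ
  have hℓpos : (0:ℝ) < (ℓ:ℝ) := by linarith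
  have hinvpos : (0:ℝ) < ((ℓ:ℝ)^(m*n))⁻¹ := by positivity
  set A : ℝ := 3*(ℓ:ℝ)^n with hA
  have hApos : 0 < A := by positivity
  set F : ℕ → ℝ := fun r => (ℓ:ℝ)^r * ((ℓ:ℝ)^(m*n))⁻¹ * (A * psi ε c ((ℓ:ℝ)^r * u)) with hF
  set Gc : ℕ → ℝ := fun r => (ℓ:ℝ)^r * ((ℓ:ℝ)^(m*n))⁻¹ * (A * kap ε c) with hGc
  have hsplit : (∑ r ∈ Finset.range (m*n), (ℓ:ℝ)^r * ((ℓ:ℝ)^(m*n))⁻¹ *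
      (3*(ℓ:ℝ)^n * psi ε c ((ℓ:ℝ)^r * u) - 3*(ℓ:ℝ)^n * kap ε c))
      = (∑ r ∈ Finset.range (m*n), F r) - (∑ r ∈ Finset.range (m*n), Gc r) := by
    rw [← Finset.sum_sub_distrib]
    apply Finset.sum_congr rfl
    intro r _
    rw [hF, hGc]
    ring
  set r₀ : ℕ := (m-1)*n with hr₀
  have hr0n : r₀ + n = m*n := by
    have h1 : (m-1)*n = m*n - n := by rw [Nat.sub_one_mul]
    have h2 : n ≤ m*n := Nat.le_mul_of_pos_left n (by omega)
    omega
  have hr₀mem : r₀ ∈ Finset.range (m*n) := by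
    rw [Finset.mem_range]; omega
  have hsumF : (∑ r ∈ Finset.range (m*n), F r)
      = F r₀ + ∑ r ∈ (Finset.range (m*n)).erase r₀, F r :=
    (Finset.add_sum_erase _ F hr₀mem).symm
  -- value at r₀
  have hpowr0 : (ℓ:ℝ)^r₀ * (ℓ:ℝ)^n = (ℓ:ℝ)^(m*n) := by rw [← pow_add, hr0n]
  have hFr₀ : F r₀ = 3*b := by
    have hlv := level_n_value hℓ hn hm hε hε8 hεn ⟨hw.choose, hw.choose_spec⟩ hc hu hB hBdef
    by_cases hBc : hB
    · rw [hF]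
      simp only []
      rw [hlv.1 hBc, hb1 hBc]
      field_simp [hA]
      nlinarith [hpowr0]
    · rw [hF]
      simp only []
      rw [hlv.2 hBc, hb0 hBc]
      ring
  -- erase sum equals truncated sum
  have hFnonneg : ∀ r, 0 ≤ F r := by
    intro r
    rw [hF]
    have := psi_nonneg (ε := ε) (c := c) (t := (ℓ:ℝ)^r * u)
    positivity
  have herase : ∑ r ∈ (Finset.range (m*n)).erase r₀, F r
      = ∑ r ∈ Finset.range (m*n - 2*n), F r := by
    symm
    apply Finset.sum_subset
    · intro r hrr
      rw [Finset.mem_range] at hrr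
      rw [Finset.mem_erase, Finset.mem_range]
      constructor
      · omega
      · omega
    · intro r hrr hnr
      rw [Finset.mem_erase, Finset.mem_range] at hrr
      rw [Finset.mem_range] at hnr
      have hψ := level_exclusion hℓ hn hm hε hε8 hεδ hv hw hc hu r hrr.2 (by omega) hrr.1
      rw [hF]
      simp only []
      rw [hψ]
      ring
  have heraseub : ∑ r ∈ Finset.range (m*n - 2*n), F r ≤ 3*((ℓ:ℝ)^n)⁻¹ := by
    have hstep : ∀ r, F r ≤ (ℓ:ℝ)^r * ((ℓ:ℝ)^(m*n))⁻¹ * A := by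
      intro r
      rw [hF]
      simp only []
      have h1 := psi_le_one (ε := ε) (c := c) (t := (ℓ:ℝ)^r * u)
      have h2 : (0:ℝ) ≤ (ℓ:ℝ)^r * ((ℓ:ℝ)^(m*n))⁻¹ := by positivity
      have h3 : A * psi ε c ((ℓ:ℝ)^r * u) ≤ A := by nlinarith
      exact mul_le_mul_of_nonneg_left h3 h2
    calc ∑ r ∈ Finset.range (m*n - 2*n), F r
        ≤ ∑ r ∈ Finset.range (m*n - 2*n), (ℓ:ℝ)^r * ((ℓ:ℝ)^(m*n))⁻¹ * A :=
          Finset.sum_le_sum (fun r _ => hstep r)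
    _ = (∑ r ∈ Finset.range (m*n - 2*n), (ℓ:ℝ)^r) * (((ℓ:ℝ)^(m*n))⁻¹ * A) := by
          rw [Finset.sum_mul]
          apply Finset.sum_congr rfl
          intro r _
          ring
    _ ≤ 3*((ℓ:ℝ)^n)⁻¹ := by
        rcases Nat.lt_or_ge (m*n) (2*n) with hc2 | hc2
        · have h0 : m*n - 2*n = 0 := by omega
          rw [h0]
          simp only [Finset.range_zero, Finset.sum_empty, zero_mul]
          positivity
        · have hsum := geom_le hℓ (m*n - 2*n)
          have hpos : (0:ℝ) < ((ℓ:ℝ)^(m*n))⁻¹ * A := by positivity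
          have h3 : (ℓ:ℝ)^(m*n - 2*n) * (((ℓ:ℝ)^(m*n))⁻¹ * A) = 3*((ℓ:ℝ)^n)⁻¹ := by
            have hpow2 : (ℓ:ℝ)^(m*n - 2*n) * (ℓ:ℝ)^(2*n) = (ℓ:ℝ)^(m*n) := by
              rw [← pow_add]
              congr 1
              omega
            have hpow3 : (ℓ:ℝ)^(2*n) = (ℓ:ℝ)^n * (ℓ:ℝ)^n := by
              rw [← pow_add]; congr 1; omega
            rw [hA, ← hpow2, hpow3]
            have hne : (ℓ:ℝ)^n ≠ 0 := by positivity
            have hne2 : (ℓ:ℝ)^(m*n-2*n) ≠ 0 := by positivity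
            field_simp
          calc (∑ r ∈ Finset.range (m*n - 2*n), (ℓ:ℝ)^r) * (((ℓ:ℝ)^(m*n))⁻¹ * A)
              ≤ (ℓ:ℝ)^(m*n - 2*n) * (((ℓ:ℝ)^(m*n))⁻¹ * A) :=
                mul_le_mul_of_nonneg_right hsum (le_of_lt hpos)
          _ = 3*((ℓ:ℝ)^n)⁻¹ := h3
  have heraselb : 0 ≤ ∑ r ∈ Finset.range (m*n - 2*n), F r :=
    Finset.sum_nonneg (fun r _ => hFnonneg r)
  -- Gc sum bounds
  have hGclb : 0 ≤ ∑ r ∈ Finset.range (m*n), Gc r := by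
    apply Finset.sum_nonneg
    intro r _
    rw [hGc]
    have := kap_nonneg (ε := ε) (c := c) hε hε8
    positivity
  have hGcub : ∑ r ∈ Finset.range (m*n), Gc r ≤ 12*(ℓ:ℝ)^n*ε := by
    have hstep : ∀ r, Gc r ≤ (ℓ:ℝ)^r * (((ℓ:ℝ)^(m*n))⁻¹ * (A * (4*ε))) := by
      intro r
      rw [hGc]
      have h1 := kap_le (ε := ε) (c := c) hε hε8
      have h2 : (0:ℝ) ≤ (ℓ:ℝ)^r * ((ℓ:ℝ)^(m*n))⁻¹ := by positivity
      have h3 : (0:ℝ) ≤ (ℓ:ℝ)^r * ((ℓ:ℝ)^(m*n))⁻¹ * A := by positivity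
      calc (ℓ:ℝ)^r * ((ℓ:ℝ)^(m*n))⁻¹ * (A * kap ε c)
          ≤ (ℓ:ℝ)^r * ((ℓ:ℝ)^(m*n))⁻¹ * (A * (4*ε)) := by
            apply mul_le_mul_of_nonneg_left _ h2
            exact mul_le_mul_of_nonneg_left h1 (le_of_lt hApos)
      _ = (ℓ:ℝ)^r * (((ℓ:ℝ)^(m*n))⁻¹ * (A * (4*ε))) := by ring
    calc ∑ r ∈ Finset.range (m*n), Gc r
        ≤ ∑ r ∈ Finset.range (m*n), (ℓ:ℝ)^r * (((ℓ:ℝ)^(m*n))⁻¹ * (A * (4*ε))) :=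
          Finset.sum_le_sum (fun r _ => hstep r)
    _ = (∑ r ∈ Finset.range (m*n), (ℓ:ℝ)^r) * (((ℓ:ℝ)^(m*n))⁻¹ * (A * (4*ε))) := by
          rw [Finset.sum_mul]
    _ ≤ (ℓ:ℝ)^(m*n) * (((ℓ:ℝ)^(m*n))⁻¹ * (A * (4*ε))) := by
          apply mul_le_mul_of_nonneg_right (geom_le hℓ _) (by positivity)
    _ = 12*(ℓ:ℝ)^n*ε := by
          rw [hA]
          field_simp
          ring
  rw [hsplit, hsumF, hFr₀, herase]
  have hb : |(3*b + (∑ r ∈ Finset.range (m*n - 2*n), F r)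
      - (∑ r ∈ Finset.range (m*n), Gc r)) - 3*b|
      = |(∑ r ∈ Finset.range (m*n - 2*n), F r) - (∑ r ∈ Finset.range (m*n), Gc r)| := by
    congr 1
    ring
  rw [hb, abs_le]
  constructor <;> linarith

end Inner2

end Stmt8Aux

set_option maxHeartbeats 2000000 in
open Stmt8Aux in
/-- Lemma `lm:family` of the paper: existence of a finite family of smooth
functions `g₁,…,g_K` on the circle such that, along any independent array of preimages, the
matrix of partial derivatives `∂Ŝ(𝐱̃_j, mn; f_𝐬)/∂s_{k(j′)} = ℓ^{-mn} ∑_i (g_{k(j')}^{(mn)})′(𝐱̃_j(i))`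
has determinant `≥ 1` for a suitable choice of indices `k(1),…,k(q)`. -/
theorem stmt8 (ℓ p q : ℕ) (hℓ : 2 ≤ ℓ) (hp : 1 ≤ p) (hq : 1 ≤ q) :
    ∃ n₀ : ℕ, 1 ≤ n₀ ∧ ∀ δ : ℝ, 0 < δ → ∀ n : ℕ, n₀ ≤ n →
      ∃ K : ℕ, 1 ≤ K ∧ ∃ g : Fin K → S1 → ℝ,
        (∀ k, ContDiff ℝ (⊤ : ℕ∞) fun t : ℝ => g k (t : S1)) ∧
        ∀ x : S1, x ∉ PerNbhd ℓ n δ → ∀ m : ℕ, 1 ≤ m →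
          ∀ xt : Fin q → Fin p → S1,
            (∀ j i, (tauC ℓ)^[m * n] (xt j i) = x) →
            (∀ j : Fin q, ∃ i : Fin p, ∀ j' : Fin q, j' < j → ∀ i' : Fin p,
              (tauC ℓ)^[(m - 1) * n] (xt j' i') ≠ (tauC ℓ)^[(m - 1) * n] (xt j i)) →
            ∃ ks : Fin q → Fin K,
              1 ≤ Matrix.det (Matrix.of fun j j' : Fin q =>
                ((ℓ : ℝ) ^ (m * n))⁻¹ *
                  ∑ i, circDeriv (birkC ℓ (g (ks j')) (m * n)) (xt j i)) := by
  classical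
  have hℓ1 : (1:ℝ) < (ℓ:ℝ) := by exact_mod_cast Nat.lt_of_lt_of_le one_lt_two hℓ
  have hℓ2 : (2:ℝ) ≤ (ℓ:ℝ) := by exact_mod_cast hℓ
  have hppos : (0:ℝ) < p := by exact_mod_cast hp
  -- the entry tolerance
  set η₀ : ℝ := ((q.factorial : ℝ) * (3*(p:ℝ)+1)^(q-1))⁻¹ with hη₀
  have hfacpos : (0:ℝ) < (q.factorial : ℝ) := by exact_mod_cast q.factorial_pos
  have hbasepos : (0:ℝ) < (3*(p:ℝ)+1)^(q-1) := by positivity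
  have hη₀pos : 0 < η₀ := by rw [hη₀]; positivity
  have hη₀le1 : η₀ ≤ 1 := by
    rw [hη₀]
    rw [inv_le_one_iff₀]
    right
    have h1 : (1:ℝ) ≤ (q.factorial : ℝ) := by exact_mod_cast q.factorial_pos
    have h2 : (1:ℝ) ≤ (3*(p:ℝ)+1)^(q-1) := one_le_pow₀ (by linarith)
    nlinarith
  refine ⟨max 1 ⌈6*(p:ℝ)/η₀⌉₊, le_max_left _ _, ?_⟩
  intro δ hδ n hn
  have hn1 : 1 ≤ n := le_trans (le_max_left _ _) hn
  have hℓn_pos : (0:ℝ) < (ℓ:ℝ)^n := by positivity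
  -- ℓ^n is large
  have hℓn_big : 6*(p:ℝ)/η₀ ≤ (ℓ:ℝ)^n := by
    have h1 : (n:ℝ) + 1 ≤ (2:ℝ)^n := by exact_mod_cast (Nat.lt_two_pow_self (n := n))
    have h2 : (2:ℝ)^n ≤ (ℓ:ℝ)^n := by
      apply pow_le_pow_left₀ (by norm_num) hℓ2
    have h3 : (⌈6*(p:ℝ)/η₀⌉₊ : ℝ) ≤ n := by
      exact_mod_cast le_trans (le_max_right _ _) hn
    have h4 : 6*(p:ℝ)/η₀ ≤ ⌈6*(p:ℝ)/η₀⌉₊ := Nat.le_ceil _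
    linarith
  have hℓn_inv : 3*(p:ℝ)*((ℓ:ℝ)^n)⁻¹ ≤ η₀/2 := by
    have h5 : ((ℓ:ℝ)^n)⁻¹ ≤ (6*(p:ℝ)/η₀)⁻¹ :=
      inv_anti₀ (by positivity) hℓn_big
    have h6 : (6*(p:ℝ)/η₀)⁻¹ = η₀/(6*(p:ℝ)) := by
      rw [inv_div]
    calc 3*(p:ℝ)*((ℓ:ℝ)^n)⁻¹ ≤ 3*(p:ℝ)*(η₀/(6*(p:ℝ))) := by
          apply mul_le_mul_of_nonneg_left _ (by positivity)
          rw [← h6]; exact h5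
    _ = η₀/2 := by field_simp; ring
  -- choose ε
  set ε : ℝ := min (η₀ * ((ℓ:ℝ)^n)⁻¹ / (24*(p:ℝ)))
      (min (δ * ((ℓ:ℝ)^n)⁻¹ / 12) (min (1/8) (((ℓ:ℝ)^n)⁻¹/4))) with hεdef
  have hε : 0 < ε := by
    rw [hεdef]
    apply lt_min (by positivity)
    exact lt_min (by positivity) (lt_min (by norm_num) (by positivity))
  have hε8 : ε ≤ 1/8 :=
    le_trans (le_trans (min_le_right _ _) (min_le_right _ _)) (min_le_left _ _)
  have hεδ : 6 * (ℓ:ℝ)^n * ε ≤ δ := by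
    have h1 : ε ≤ δ * ((ℓ:ℝ)^n)⁻¹ / 12 :=
      le_trans (min_le_right _ _) (min_le_left _ _)
    have h2 : 6 * (ℓ:ℝ)^n * (δ * ((ℓ:ℝ)^n)⁻¹ / 12) = δ/2 := by
      field_simp
      ring
    nlinarith
  have hεn : 3*ε < ((ℓ:ℝ)^n)⁻¹ := by
    have h1 : ε ≤ ((ℓ:ℝ)^n)⁻¹/4 :=
      le_trans (min_le_right _ _) (le_trans (min_le_right _ _) (min_le_right _ _))
    have h2 : (0:ℝ) < ((ℓ:ℝ)^n)⁻¹ := by positivity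
    linarith
  have hεη : 12*(p:ℝ)*(ℓ:ℝ)^n*ε ≤ η₀/2 := by
    have h1 : ε ≤ η₀ * ((ℓ:ℝ)^n)⁻¹ / (24*(p:ℝ)) := min_le_left _ _
    have h2 : 12*(p:ℝ)*(ℓ:ℝ)^n*(η₀ * ((ℓ:ℝ)^n)⁻¹ / (24*(p:ℝ))) = η₀/2 := by
      field_simp
      ring
    nlinarith [mul_le_mul_of_nonneg_left h1 (by positivity : (0:ℝ) ≤ 12*(p:ℝ)*(ℓ:ℝ)^n)]
  -- the combined entry error bound
  have hη' : (p:ℝ) * (3*((ℓ:ℝ)^n)⁻¹ + 12*(ℓ:ℝ)^n*ε) ≤ η₀ := by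
    have e1 : (p:ℝ) * (3*((ℓ:ℝ)^n)⁻¹) = 3*(p:ℝ)*((ℓ:ℝ)^n)⁻¹ := by ring
    have e2 : (p:ℝ) * (12*(ℓ:ℝ)^n*ε) = 12*(p:ℝ)*(ℓ:ℝ)^n*ε := by ring
    nlinarith
  -- number of bump functions
  set K : ℕ := ⌈2/ε⌉₊ with hK
  have hK0 : (0:ℝ) < 2/ε := by positivity
  have hKge : 2/ε ≤ (K:ℝ) := Nat.le_ceil _
  have hKpos : (0:ℝ) < (K:ℝ) := lt_of_lt_of_le hK0 hKge
  have hK1 : 1 ≤ K := by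
    by_contra hcK
    push_neg at hcK
    interval_cases K
    · simp at hKpos
  have hKinv : 1/(K:ℝ) ≤ ε := by
    have h1 : 1/(K:ℝ) ≤ 1/(2/ε) := one_div_le_one_div_of_le hK0 hKge
    have h2 : 1/(2/ε) = ε/2 := by field_simp
    linarith
  refine ⟨K, hK1, ?_⟩
  -- the family of functions
  set A : ℝ := 3*(ℓ:ℝ)^n with hA
  set cen : Fin K → ℝ := fun k => ((k:ℕ):ℝ)/(K:ℝ) with hcen
  set g : Fin K → S1 → ℝ :=
    fun k => (Gfun_periodic (A := A) (ε := ε) (c := cen k) hε hε8).lift with hg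
  refine ⟨g, ?_, ?_⟩
  · intro k
    have hfun : (fun t : ℝ => g k (t : S1)) = Gfun A ε (cen k) := by
      funext t
      exact (Gfun_periodic hε hε8).lift_coe t
    rw [hfun]
    exact Gfun_contDiff hε hε8
  -- main claim
  intro x hx m hm xt hxt hind
  have hmn0 : (m-1)*n + n = m*n := by
    have h1 : (m-1)*n = m*n - n := by rw [Nat.sub_one_mul]
    have h2 : n ≤ m*n := Nat.le_mul_of_pos_left n (by omega)
    omega
  set v : ℝ := (AddCircle.equivIco 1 0 x : ℝ) with hvdef
  have hvx : ((v:ℝ) : S1) = x := coe_repr x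
  have hv' : ((v:ℝ) : S1) ∉ PerNbhd ℓ n δ := by rw [hvx]; exact hx
  set uu : Fin q → Fin p → ℝ := fun j i => (AddCircle.equivIco 1 0 (xt j i) : ℝ) with huu
  have hucoe : ∀ j i, ((uu j i : ℝ) : S1) = xt j i := fun j i => coe_repr _
  have hu : ∀ j i, ∃ J : ℤ, (ℓ:ℝ)^(m*n) * uu j i - v = J := by
    intro j i
    have h1 := hxt j i
    rw [← hucoe j i, ← hvx, tau_iter_coe] at h1
    exact coe_eq_coe.1 h1
  set ii : Fin q → Fin p := fun j => (hind j).choose with hiidef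
  have hiisp : ∀ j : Fin q, ∀ j' : Fin q, j' < j → ∀ i' : Fin p,
      (tauC ℓ)^[(m-1)*n] (xt j' i') ≠ (tauC ℓ)^[(m-1)*n] (xt j (ii j)) :=
    fun j => (hind j).choose_spec
  set w : Fin q → ℝ := fun j => (ℓ:ℝ)^((m-1)*n) * uu j (ii j) with hwdef
  have hpw : (ℓ:ℝ)^n * (ℓ:ℝ)^((m-1)*n) = (ℓ:ℝ)^(m*n) := by
    rw [← pow_add]
    congr 1
    omega
  have hwv : ∀ j, ∃ J : ℤ, (ℓ:ℝ)^n * w j - v = J := by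
    intro j
    obtain ⟨J, hJ⟩ := hu j (ii j)
    refine ⟨J, ?_⟩
    rw [hwdef]
    simp only []
    linear_combination hJ + (uu j (ii j)) * hpw
  -- nearest grid point index
  have hksp : ∀ j : Fin q, ⌊Int.fract (w j) * K⌋₊ < K := by
    intro j
    have h0 : (0:ℝ) ≤ Int.fract (w j) * K := mul_nonneg (Int.fract_nonneg _) hKpos.le
    rw [Nat.floor_lt h0]
    calc Int.fract (w j) * K < 1 * K :=
          mul_lt_mul_of_pos_right (Int.fract_lt_one _) hKpos
    _ = K := one_mul _
  set ks : Fin q → Fin K := fun j => ⟨⌊Int.fract (w j) * K⌋₊, hksp j⟩ with hksdef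
  have hcw : ∀ j, ∃ m₁ : ℤ, |w j - cen (ks j) - m₁| ≤ ε := by
    intro j
    refine ⟨⌊w j⌋, ?_⟩
    have h0 : (0:ℝ) ≤ Int.fract (w j) * K := mul_nonneg (Int.fract_nonneg _) hKpos.le
    have h2 : ((⌊Int.fract (w j) * K⌋₊ : ℕ) : ℝ) ≤ Int.fract (w j) * K := Nat.floor_le h0
    have h3 : Int.fract (w j) * K < (⌊Int.fract (w j) * K⌋₊ : ℝ) + 1 :=
      Nat.lt_floor_add_one _
    have hval : w j - cen (ks j) - ⌊w j⌋ = Int.fract (w j) - ((⌊Int.fract (w j) * K⌋₊ : ℕ) : ℝ)/(K:ℝ) := by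
      rw [hcen, hksdef]
      simp only [Int.fract]
      ring
    rw [hval]
    have hlow : (0:ℝ) ≤ Int.fract (w j) - ((⌊Int.fract (w j) * K⌋₊ : ℕ) : ℝ)/(K:ℝ) := by
      rw [sub_nonneg, div_le_iff₀ hKpos]
      exact h2
    have hup : Int.fract (w j) - ((⌊Int.fract (w j) * K⌋₊ : ℕ) : ℝ)/(K:ℝ) ≤ 1/(K:ℝ) := by
      rw [sub_le_iff_le_add, ← add_div, le_div_iff₀ hKpos]
      linarith
    rw [abs_of_nonneg hlow]
    linarith
  refine ⟨ks, ?_⟩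
  set M : Matrix (Fin q) (Fin q) ℝ := Matrix.of (fun j j' : Fin q =>
    ((ℓ:ℝ)^(m*n))⁻¹ * ∑ i, circDeriv (birkC ℓ (g (ks j')) (m*n)) (xt j i)) with hM
  set T : Fin q → Fin q → ℝ := fun j j' => ∑ i : Fin p,
    (if (tauC ℓ)^[(m-1)*n] (xt j i) = (tauC ℓ)^[(m-1)*n] (xt j' (ii j')) then (1:ℝ) else 0)
    with hT
  have hMentry : ∀ j j', |M j j' - 3 * T j j'|
      ≤ (p:ℝ) * (3*((ℓ:ℝ)^n)⁻¹ + 12*(ℓ:ℝ)^n*ε) := by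
    intro j j'
    have hMrw : M j j' = ∑ i : Fin p, ∑ r ∈ Finset.range (m*n),
        (ℓ:ℝ)^r * ((ℓ:ℝ)^(m*n))⁻¹ *
        (3*(ℓ:ℝ)^n * psi ε (cen (ks j')) ((ℓ:ℝ)^r * uu j i)
          - 3*(ℓ:ℝ)^n * kap ε (cen (ks j'))) := by
      rw [hM]
      show ((ℓ:ℝ)^(m*n))⁻¹ * ∑ i, circDeriv (birkC ℓ (g (ks j')) (m*n)) (xt j i) = _
      rw [Finset.mul_sum]
      apply Finset.sum_congr rfl
      intro i _
      have hgk : g (ks j') = (Gfun_periodic (A := A) (ε := ε) (c := cen (ks j')) hε hε8).lift := by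
        rw [hg]
      rw [hgk, circDeriv_birk ℓ (Gfun A ε (cen (ks j')))
        (fun t => A * psi ε (cen (ks j')) t - A * kap ε (cen (ks j')))
        (Gfun_periodic hε hε8) (fun t => Gfun_hasDerivAt hε hε8 t) (m*n) (xt j i)]
      rw [Finset.mul_sum]
      apply Finset.sum_congr rfl
      intro r _
      rw [hA]
      show ((ℓ:ℝ)^(m*n))⁻¹ * ((ℓ:ℝ)^r *
        (3*(ℓ:ℝ)^n * psi ε (cen (ks j')) ((ℓ:ℝ)^r * uu j i)
          - 3*(ℓ:ℝ)^n * kap ε (cen (ks j')))) = _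
      ring
    have hTrw : 3 * T j j' = ∑ i : Fin p,
        3 * (if (tauC ℓ)^[(m-1)*n] (xt j i) = (tauC ℓ)^[(m-1)*n] (xt j' (ii j'))
          then (1:ℝ) else 0) := by
      rw [hT]
      rw [Finset.mul_sum]
    rw [hMrw, hTrw, ← Finset.sum_sub_distrib]
    calc |∑ i : Fin p, ((∑ r ∈ Finset.range (m*n),
        (ℓ:ℝ)^r * ((ℓ:ℝ)^(m*n))⁻¹ *
        (3*(ℓ:ℝ)^n * psi ε (cen (ks j')) ((ℓ:ℝ)^r * uu j i)
          - 3*(ℓ:ℝ)^n * kap ε (cen (ks j'))))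
        - 3 * (if (tauC ℓ)^[(m-1)*n] (xt j i) = (tauC ℓ)^[(m-1)*n] (xt j' (ii j'))
          then (1:ℝ) else 0))|
        ≤ ∑ i : Fin p, |(∑ r ∈ Finset.range (m*n),
        (ℓ:ℝ)^r * ((ℓ:ℝ)^(m*n))⁻¹ *
        (3*(ℓ:ℝ)^n * psi ε (cen (ks j')) ((ℓ:ℝ)^r * uu j i)
          - 3*(ℓ:ℝ)^n * kap ε (cen (ks j'))))
        - 3 * (if (tauC ℓ)^[(m-1)*n] (xt j i) = (tauC ℓ)^[(m-1)*n] (xt j' (ii j'))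
          then (1:ℝ) else 0)| := Finset.abs_sum_le_sum_abs _ _
    _ ≤ ∑ _i : Fin p, (3*((ℓ:ℝ)^n)⁻¹ + 12*(ℓ:ℝ)^n*ε) := by
        apply Finset.sum_le_sum
        intro i _
        have hBdef : ((tauC ℓ)^[(m-1)*n] (xt j i) = (tauC ℓ)^[(m-1)*n] (xt j' (ii j')))
            ↔ ∃ N : ℤ, (ℓ:ℝ)^((m-1)*n) * uu j i - w j' = N := by
          rw [hwdef]
          simp only []
          rw [← hucoe j i, ← hucoe j' (ii j'), tau_iter_coe, tau_iter_coe]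
          rw [coe_eq_coe]
        exact inner_est hℓ hn1 hm hε hε8 hεδ hεn hv' (hwv j') (hcw j') (hu j i)
          _ hBdef _ (fun h => if_pos h) (fun h => if_neg h)
    _ = (p:ℝ) * (3*((ℓ:ℝ)^n)⁻¹ + 12*(ℓ:ℝ)^n*ε) := by
        rw [Finset.sum_const, Finset.card_univ, Fintype.card_fin, nsmul_eq_mul]
  -- T bounds
  have hTnn : ∀ j j', 0 ≤ T j j' := by
    intro j j'
    apply Finset.sum_nonneg
    intro i _
    split_ifs <;> norm_num
  have hTub : ∀ j j', T j j' ≤ (p:ℝ) := by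
    intro j j'
    calc T j j' ≤ ∑ _i : Fin p, (1:ℝ) := by
          apply Finset.sum_le_sum
          intro i _
          split_ifs <;> norm_num
    _ = (p:ℝ) := by
          rw [Finset.sum_const, Finset.card_univ, Fintype.card_fin, nsmul_eq_mul, mul_one]
  have hTdiag : ∀ j, 1 ≤ T j j := by
    intro j
    rw [hT]
    simp only []
    have hmem : (ii j) ∈ (Finset.univ : Finset (Fin p)) := Finset.mem_univ _
    have h1 : (if (tauC ℓ)^[(m-1)*n] (xt j (ii j)) = (tauC ℓ)^[(m-1)*n] (xt j (ii j))
        then (1:ℝ) else 0) = 1 := if_pos rfl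
    calc (1:ℝ) = (if (tauC ℓ)^[(m-1)*n] (xt j (ii j)) = (tauC ℓ)^[(m-1)*n] (xt j (ii j))
        then (1:ℝ) else 0) := h1.symm
    _ ≤ _ := by
        apply Finset.single_le_sum
          (f := fun i : Fin p => if (tauC ℓ)^[(m-1)*n] (xt j i) = (tauC ℓ)^[(m-1)*n] (xt j (ii j))
            then (1:ℝ) else 0) _ hmem
        intro i _
        split_ifs <;> norm_num
  have hTup : ∀ j j', j < j' → T j j' = 0 := by
    intro j j' hjj
    rw [hT]
    simp only []
    apply Finset.sum_eq_zero
    intro i _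
    rw [if_neg (hiisp j' j hjj i)]
  -- determinant bound
  have hMd : ∀ j, 2 ≤ M j j := by
    intro j
    have h1 := (abs_le.1 (hMentry j j)).1
    have h2 := hTdiag j
    nlinarith [hη', hη₀le1]
  have hMall : ∀ j j', |M j j'| ≤ 3*(p:ℝ)+1 := by
    intro j j'
    have h1 := hMentry j j'
    have h2 := hTub j j'
    have h3 := hTnn j j'
    have h4 : |M j j'| ≤ |M j j' - 3*T j j'| + |3*T j j'| := by
      calc |M j j'| = |(M j j' - 3*T j j') + 3*T j j'| := by ring_nf
      _ ≤ _ := abs_add_le _ _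
    have h5 : |3*T j j'| = 3*T j j' := abs_of_nonneg (by linarith)
    nlinarith [hη', hη₀le1]
  have hMup : ∀ j j' : Fin q, j < j' → |M j j'| ≤ η₀ := by
    intro j j' hjj
    have h1 := hMentry j j'
    rw [hTup j j' hjj] at h1
    simp only [mul_zero, sub_zero] at h1
    linarith [hη']
  have hdet := det_lower hq M (3*(p:ℝ)+1) η₀ hη₀pos.le (by linarith) hMd hMall hMup
  have hcancel : (q.factorial : ℝ) * η₀ * (3*(p:ℝ)+1)^(q-1) = 1 := by
    rw [hη₀]
    field_simp
  have h2q : (2:ℝ) ≤ 2^q := by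
    calc (2:ℝ) = 2^1 := by norm_num
    _ ≤ 2^q := by apply pow_le_pow_right₀ <;> norm_num [hq]
  nlinarith [hdet]
end
end

section
/- Let 0 < y_min < y_max and let f : S¹ → ℝ be continuous with y_min < f(x) < y_max for every x ∈ S¹. Then for every z ∈ X_f and every real t > y_max, the set (T_f^t)^{−1}(z) = {w ∈ X_f : T_f^t(w) = z} is finite and ℓ^{(t−y_max)/y_max} ≤ #(T_f^t)^{−1}(z) ≤ ℓ^{⌈(t+y_max)/y_min⌉}, where ℓ^{(t−y_max)/y_max} denotes the real power. -/
noncomputable section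
open MeasureTheory

namespace Stmt11Aux

lemma birk_zero (ℓ : ℕ) (f : S1 → ℝ) (x : S1) : birkC ℓ f 0 x = 0 := by simp [birkC]

lemma birk_succ (ℓ : ℕ) (f : S1 → ℝ) (n : ℕ) (x : S1) :
    birkC ℓ f (n + 1) x = birkC ℓ f n x + f ((tauC ℓ)^[n] x) := by
  simp [birkC, Finset.sum_range_succ]

lemma birk_add (ℓ : ℕ) (f : S1 → ℝ) (m n : ℕ) (x : S1) :
    birkC ℓ f (m + n) x = birkC ℓ f m x + birkC ℓ f n ((tauC ℓ)^[m] x) := by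
  simp only [birkC, Finset.sum_range_add]
  congr 1
  refine Finset.sum_congr rfl fun i _ => ?_
  rw [add_comm m i, Function.iterate_add_apply]

lemma birk_ge (ℓ : ℕ) (f : S1 → ℝ) {ymin : ℝ} (hfb : ∀ x, ymin < f x) (n : ℕ) (x : S1) :
    (n : ℝ) * ymin ≤ birkC ℓ f n x := by
  have : ∑ _i ∈ Finset.range n, ymin ≤ birkC ℓ f n x :=
    Finset.sum_le_sum fun i _ => (hfb _).le
  simpa [mul_comm] using this

lemma birk_le (ℓ : ℕ) (f : S1 → ℝ) {ymax : ℝ} (hfb : ∀ x, f x < ymax) (n : ℕ) (x : S1) :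
    birkC ℓ f n x ≤ (n : ℝ) * ymax := by
  have : birkC ℓ f n x ≤ ∑ _i ∈ Finset.range n, ymax :=
    Finset.sum_le_sum fun i _ => (hfb _).le
  simpa [mul_comm] using this

lemma birk_strictMono (ℓ : ℕ) (f : S1 → ℝ) (hpos : ∀ x, 0 < f x) (x : S1) :
    StrictMono fun n => birkC ℓ f n x := by
  apply strictMono_nat_of_lt_succ
  intro n
  rw [birk_succ]
  linarith [hpos ((tauC ℓ)^[n] x)]

lemma nOf_eq (ℓ : ℕ) (f : S1 → ℝ) (hpos : ∀ x, 0 < f x) {x : S1} {s : ℝ} {n : ℕ}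
    (h1 : birkC ℓ f n x ≤ s) (h2 : s < birkC ℓ f (n + 1) x) : nOf ℓ f x s = n := by
  have hsm := birk_strictMono ℓ f hpos x
  have hset : {m : ℕ | birkC ℓ f m x ≤ s} = Set.Iic n := by
    ext m
    simp only [Set.mem_setOf_eq, Set.mem_Iic]
    constructor
    · intro hm
      by_contra hmn
      push_neg at hmn
      have : birkC ℓ f (n + 1) x ≤ birkC ℓ f m x := hsm.monotone hmn
      linarith
    · intro hm
      exact le_trans (hsm.monotone hm) h1
  rw [nOf, hset, csSup_Iic]

lemma nOf_spec (ℓ : ℕ) (f : S1 → ℝ) {ymin : ℝ} (h0 : 0 < ymin) (hfb : ∀ x, ymin < f x)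
    {x : S1} {s : ℝ} (hs : 0 ≤ s) :
    birkC ℓ f (nOf ℓ f x s) x ≤ s ∧ s < birkC ℓ f (nOf ℓ f x s + 1) x := by
  have hne : {m : ℕ | birkC ℓ f m x ≤ s}.Nonempty := ⟨0, by simp [birk_zero, hs]⟩
  have hbdd : BddAbove {m : ℕ | birkC ℓ f m x ≤ s} := by
    refine ⟨Nat.ceil (s / ymin), fun m hm => ?_⟩
    have h1 : (m : ℝ) * ymin ≤ s := le_trans (birk_ge ℓ f hfb m x) hm
    have h2 : (m : ℝ) ≤ s / ymin := (le_div_iff₀ h0).mpr h1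
    exact_mod_cast le_trans h2 (Nat.le_ceil _)
  have hmem := Nat.sSup_mem hne hbdd
  refine ⟨hmem, ?_⟩
  by_contra h
  push_neg at h
  have : nOf ℓ f x s + 1 ≤ nOf ℓ f x s := le_csSup hbdd h
  omega

lemma tau_iter (ℓ : ℕ) (m : ℕ) (x : S1) : (tauC ℓ)^[m] x = (ℓ ^ m) • x := by
  induction m generalizing x with
  | zero => simp
  | succ m ih =>
    rw [Function.iterate_succ_apply, pow_succ, mul_smul]
    exact ih (ℓ • x)

lemma circle_fiber (k : ℕ) (hk : 0 < k) (c : S1) :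
    Finite {x : S1 // k • x = c} ∧ Nat.card {x : S1 // k • x = c} = k := by
  have hkR : (0 : ℝ) < k := by exact_mod_cast hk
  set r : ℝ := (AddCircle.equivIco 1 0 c : ℝ) with hr
  have hrc : ((r : ℝ) : S1) = c := (AddCircle.equivIco 1 0).symm_apply_apply c
  have hrI : r ∈ Set.Ico (0 : ℝ) 1 := by simpa using (AddCircle.equivIco 1 0 c).2
  have key : ∀ j : Fin k, k • (((r + j) / k : ℝ) : S1) = c := by
    intro j
    rw [← AddCircle.coe_nsmul]
    have h1 : k • ((r + j) / k : ℝ) = r + j := by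
      rw [nsmul_eq_mul]; field_simp
    rw [h1, AddCircle.coe_add]
    have hj0 : (((j : ℕ) : ℝ) : S1) = 0 :=
      ((AddCircle.coe_eq_zero_iff (1:ℝ))).2 ⟨(j : ℕ), by simp⟩
    rw [hj0, add_zero, hrc]
  set g : Fin k → {x : S1 // k • x = c} := fun j => ⟨_, key j⟩ with hg
  have hbij : Function.Bijective g := by
    constructor
    · intro i j hij
      have h1 : (((r + i) / k : ℝ) : S1) = (((r + j) / k : ℝ) : S1) := congrArg Subtype.val hij
      have h2 : ((((r + i) / k - (r + j) / k : ℝ)) : S1) = 0 := by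
        rw [AddCircle.coe_sub, h1, sub_self]
      obtain ⟨n, hn⟩ := ((AddCircle.coe_eq_zero_iff (1:ℝ))).1 h2
      have hn' : (n : ℝ) = ((i : ℝ) - (j : ℝ)) / k := by
        have : (n : ℝ) = (r + i) / k - (r + j) / k := by simpa using hn
        rw [this]; ring
      have hik : (i : ℝ) < k := by exact_mod_cast i.2
      have hjk : (j : ℝ) < k := by exact_mod_cast j.2
      have hi0 : (0 : ℝ) ≤ i := by positivity
      have hj0 : (0 : ℝ) ≤ j := by positivity
      have hlt : (n : ℝ) < 1 := by
        rw [hn', div_lt_one hkR]; linarith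
      have hgt : (-1 : ℝ) < n := by
        rw [hn', lt_div_iff₀ hkR]; linarith
      have hn0 : n = 0 := by
        have l1 : n < 1 := by exact_mod_cast hlt
        have l2 : -1 < n := by exact_mod_cast hgt
        omega
      have : (i : ℝ) = j := by
        rw [hn0] at hn'
        have : ((i : ℝ) - j) / k = 0 := by rw [← hn']; simp
        have := (div_eq_zero_iff.1 this).resolve_right (by positivity)
        linarith
      exact Fin.ext (by exact_mod_cast this)
    · intro x
      set u : ℝ := (AddCircle.equivIco 1 0 x.1 : ℝ) with hu
      have huc : ((u : ℝ) : S1) = x.1 := (AddCircle.equivIco 1 0).symm_apply_apply x.1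
      have huI : u ∈ Set.Ico (0 : ℝ) 1 := by simpa using (AddCircle.equivIco 1 0 x.1).2
      have hx : k • x.1 = c := x.2
      have h1 : ((k * u : ℝ) : S1) = c := by
        rw [← huc, ← AddCircle.coe_nsmul, nsmul_eq_mul] at hx
        exact hx
      have h2 : ((k * u - r : ℝ) : S1) = 0 := by
        rw [AddCircle.coe_sub, h1, hrc, sub_self]
      obtain ⟨n, hn⟩ := ((AddCircle.coe_eq_zero_iff (1:ℝ))).1 h2
      have hn' : (n : ℝ) = k * u - r := by simpa using hn
      have hb1 : (0 : ℝ) ≤ k * u := mul_nonneg hkR.le huI.1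
      have hb2 : k * u < k := by
        calc k * u < k * 1 := by
              exact mul_lt_mul_of_pos_left huI.2 hkR
          _ = k := mul_one _
      have hgt : (-1 : ℝ) < n := by rw [hn']; linarith [hrI.2]
      have hlt : (n : ℝ) < k := by rw [hn']; linarith [hrI.1]
      have hn0 : 0 ≤ n := by
        have : (-1 : ℤ) < n := by exact_mod_cast hgt
        omega
      have hnk : n.toNat < k := by
        have h3 : n < (k : ℤ) := by exact_mod_cast hlt
        omega
      refine ⟨⟨n.toNat, hnk⟩, ?_⟩
      apply Subtype.ext
      show (((r + (n.toNat : ℕ)) / k : ℝ) : S1) = x.1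
      have hju : ((r + (n.toNat : ℕ)) / k : ℝ) = u := by
        have h4 : ((n.toNat : ℤ) : ℝ) = (n : ℝ) := by rw [Int.toNat_of_nonneg hn0]
        push_cast at h4 ⊢
        rw [h4, hn']
        field_simp
        ring
      rw [hju, huc]
  exact ⟨Finite.of_surjective g hbij.2, by
    rw [← Nat.card_eq_of_bijective g hbij, Nat.card_eq_fintype_card, Fintype.card_fin]⟩

lemma tau_fiber (ℓ : ℕ) (hℓ : 0 < ℓ) (m : ℕ) (c : S1) :
    Finite {x : S1 // (tauC ℓ)^[m] x = c} ∧
      Nat.card {x : S1 // (tauC ℓ)^[m] x = c} = ℓ ^ m := by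
  have e : {x : S1 // (tauC ℓ)^[m] x = c} ≃ {x : S1 // (ℓ ^ m) • x = c} :=
    Equiv.subtypeEquivRight fun x => by rw [tau_iter]
  obtain ⟨h1, h2⟩ := circle_fiber (ℓ ^ m) (pow_pos hℓ m) c
  exact ⟨Finite.of_equiv _ e.symm, by rw [Nat.card_congr e, h2]⟩

section Main

variable {ℓ : ℕ} {f : S1 → ℝ} {ymin ymax : ℝ} {z : S1 × ℝ} {t : ℝ}

lemma nOf_shift (h0 : 0 < ymin) (hfb : ∀ x, ymin < f x)
    (hz0 : 0 ≤ z.2) (hz1 : z.2 < f z.1) {n : ℕ} {x : S1}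
    (hτ : (tauC ℓ)^[n] x = z.1) :
    nOf ℓ f x (z.2 + birkC ℓ f n x) = n := by
  have hpos : ∀ y, 0 < f y := fun y => h0.trans (hfb y)
  apply nOf_eq ℓ f hpos
  · linarith
  · rw [birk_succ, hτ]; linarith

lemma mem_P_iff (h0 : 0 < ymin) (hfb : ∀ x, ymin < f x)
    (hz0 : 0 ≤ z.2) (hz1 : z.2 < f z.1) (w : S1 × ℝ) :
    (w ∈ Xf ℓ f ∧ Tf ℓ f t w = z) ↔
      ∃ n : ℕ, (tauC ℓ)^[n] w.1 = z.1 ∧ w.2 = z.2 + birkC ℓ f n w.1 - t ∧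
        t - z.2 ≤ birkC ℓ f n w.1 ∧ birkC ℓ f n w.1 < t - z.2 + f w.1 := by
  constructor
  · rintro ⟨⟨hw0, hw1⟩, hT⟩
    rw [Prod.ext_iff] at hT
    obtain ⟨hT1, hT2⟩ := hT
    simp only [Tf] at hT1 hT2
    exact ⟨nOf ℓ f w.1 (w.2 + t), hT1, by linarith, by linarith, by linarith⟩
  · rintro ⟨n, hτ, hy, hge, hlt⟩
    have harg : w.2 + t = z.2 + birkC ℓ f n w.1 := by linarith
    have hn : nOf ℓ f w.1 (w.2 + t) = n := by
      rw [harg]; exact nOf_shift h0 hfb hz0 hz1 hτ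
    refine ⟨⟨by simpa using (by linarith : (0:ℝ) ≤ w.2), by simpa using (by linarith : w.2 < f w.1)⟩, ?_⟩
    rw [Prod.ext_iff]
    constructor
    · show (tauC ℓ)^[nOf ℓ f w.1 (w.2 + t)] w.1 = z.1
      rw [hn, hτ]
    · show w.2 + t - birkC ℓ f (nOf ℓ f w.1 (w.2 + t)) w.1 = z.2
      rw [hn]; linarith

lemma lvl_bounds (h0 : 0 < ymin) (h1 : ymin < ymax)
    (hfb : ∀ x, ymin < f x ∧ f x < ymax)
    (hz0 : 0 ≤ z.2) (hzm : z.2 < ymax) {n : ℕ} {x : S1}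
    (hge : t - z.2 ≤ birkC ℓ f n x) (hlt : birkC ℓ f n x < t - z.2 + f x) :
    Nat.ceil ((t - ymax) / ymax) ≤ n ∧ n ≤ Nat.ceil ((t + ymax) / ymin) := by
  have hymax : 0 < ymax := h0.trans h1
  have hle := birk_le ℓ f (fun y => (hfb y).2) n x
  have hgeb := birk_ge ℓ f (fun y => (hfb y).1) n x
  constructor
  · rw [Nat.ceil_le, div_le_iff₀ hymax]
    linarith
  · have hfx : f x < ymax := (hfb x).2
    have h2 : (n : ℝ) ≤ (t + ymax) / ymin := by
      rw [le_div_iff₀ h0]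
      linarith
    exact_mod_cast le_trans h2 (Nat.le_ceil _)

end Main

end Stmt11Aux

open Stmt11Aux in
/-- cf. `(eq:card_backward_orbit)` of the paper: for `t > y_max` the backward
orbit `(T_f^t)^{-1}(z)` is finite, with cardinality between `ℓ^{(t-y_max)/y_max}` (a real power)
and `ℓ^{⌈(t+y_max)/y_min⌉}`. -/
theorem stmt11 (ℓ : ℕ) (hℓ : 2 ≤ ℓ) (ymin ymax : ℝ) (h0 : 0 < ymin) (h1 : ymin < ymax)
    (f : S1 → ℝ) (hf : Continuous f) (hfb : ∀ x, ymin < f x ∧ f x < ymax)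
    (z : S1 × ℝ) (hz : z ∈ Xf ℓ f) (t : ℝ) (ht : ymax < t) :
    {w : S1 × ℝ | w ∈ Xf ℓ f ∧ Tf ℓ f t w = z}.Finite ∧
      (ℓ : ℝ) ^ ((t - ymax) / ymax) ≤
        (Nat.card {w : S1 × ℝ // w ∈ Xf ℓ f ∧ Tf ℓ f t w = z} : ℝ) ∧
      Nat.card {w : S1 × ℝ // w ∈ Xf ℓ f ∧ Tf ℓ f t w = z} ≤
        ℓ ^ (Nat.ceil ((t + ymax) / ymin)) := by
  classical
  obtain ⟨hz0, hz1⟩ := hz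
  have hℓ0 : 0 < ℓ := by omega
  have hymax : 0 < ymax := h0.trans h1
  have hzm : z.2 < ymax := hz1.trans (hfb z.1).2
  have ht0 : 0 < t := hymax.trans ht
  have htz : 0 < t - z.2 := by linarith
  have hpos : ∀ y, 0 < f y := fun y => h0.trans (hfb y).1
  have hfb1 : ∀ x, ymin < f x := fun y => (hfb y).1
  set N : ℕ := Nat.ceil ((t + ymax) / ymin) with hNdef
  set n₁ : ℕ := Nat.ceil ((t - ymax) / ymax) with hn1def
  have hn1N : n₁ ≤ N :=
    Nat.ceil_le_ceil (div_le_div₀ (by linarith) (by linarith) h0 h1.le)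
  have hNy : t + ymax ≤ (N : ℝ) * ymin := by
    have := Nat.le_ceil ((t + ymax) / ymin)
    rw [div_le_iff₀ h0] at this
    exact this
  -- level function facts
  have hlvl : ∀ w : S1 × ℝ, (w ∈ Xf ℓ f ∧ Tf ℓ f t w = z) →
      (tauC ℓ)^[nOf ℓ f w.1 (w.2 + t)] w.1 = z.1 ∧
      w.2 = z.2 + birkC ℓ f (nOf ℓ f w.1 (w.2 + t)) w.1 - t ∧
      t - z.2 ≤ birkC ℓ f (nOf ℓ f w.1 (w.2 + t)) w.1 ∧
      birkC ℓ f (nOf ℓ f w.1 (w.2 + t)) w.1 < t - z.2 + f w.1 := by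
    intro w hw
    obtain ⟨n, hτ, hy, hge, hlt⟩ := (mem_P_iff h0 hfb1 hz0 hz1 w).1 hw
    have hn : nOf ℓ f w.1 (w.2 + t) = n := by
      have harg : w.2 + t = z.2 + birkC ℓ f n w.1 := by linarith
      rw [harg]; exact nOf_shift h0 hfb1 hz0 hz1 hτ
    rw [hn]; exact ⟨hτ, hy, hge, hlt⟩
  have hlvlN : ∀ w : S1 × ℝ, (hw : w ∈ Xf ℓ f ∧ Tf ℓ f t w = z) →
      n₁ ≤ nOf ℓ f w.1 (w.2 + t) ∧ nOf ℓ f w.1 (w.2 + t) ≤ N := by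
    intro w hw
    obtain ⟨-, -, hge, hlt⟩ := hlvl w hw
    exact lvl_bounds h0 h1 hfb hz0 hzm hge hlt
  -- the J function spec
  have hJ : ∀ x : S1, (tauC ℓ)^[N] x = z.1 →
      birkC ℓ f (nOf ℓ f x (birkC ℓ f N x - t + z.2)) x ≤ birkC ℓ f N x - t + z.2 ∧
      birkC ℓ f N x - t + z.2 <
        birkC ℓ f (nOf ℓ f x (birkC ℓ f N x - t + z.2) + 1) x ∧
      nOf ℓ f x (birkC ℓ f N x - t + z.2) ≤ N := by
    intro x hx
    have hge := birk_ge ℓ f hfb1 N x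
    have hs0 : 0 ≤ birkC ℓ f N x - t + z.2 := by linarith
    obtain ⟨hA, hB⟩ := nOf_spec ℓ f h0 hfb1 hs0
    refine ⟨hA, hB, ?_⟩
    by_contra hc
    push_neg at hc
    have hmono : birkC ℓ f N x ≤ birkC ℓ f (nOf ℓ f x (birkC ℓ f N x - t + z.2)) x :=
      (birk_strictMono ℓ f hpos x).monotone hc.le
    linarith
  have hsplit : ∀ (x : S1) (j : ℕ), j ≤ N →
      birkC ℓ f (N - j) ((tauC ℓ)^[j] x) = birkC ℓ f N x - birkC ℓ f j x := by
    intro x j hj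
    have h := birk_add ℓ f j (N - j) x
    rw [Nat.add_sub_cancel' hj] at h
    linarith
  have hiter : ∀ (x : S1) (j : ℕ), j ≤ N →
      (tauC ℓ)^[N] x = (tauC ℓ)^[N - j] ((tauC ℓ)^[j] x) := by
    intro x j hj
    conv_lhs => rw [← Nat.add_sub_cancel' hj]
    rw [add_comm, Function.iterate_add_apply]
  -- Phi0 and membership
  have hΦmem : ∀ x : S1, (hx : (tauC ℓ)^[N] x = z.1) →
      (((tauC ℓ)^[nOf ℓ f x (birkC ℓ f N x - t + z.2)] x,
        z.2 + birkC ℓ f (N - nOf ℓ f x (birkC ℓ f N x - t + z.2))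
          ((tauC ℓ)^[nOf ℓ f x (birkC ℓ f N x - t + z.2)] x) - t) ∈ Xf ℓ f ∧
       Tf ℓ f t ((tauC ℓ)^[nOf ℓ f x (birkC ℓ f N x - t + z.2)] x,
        z.2 + birkC ℓ f (N - nOf ℓ f x (birkC ℓ f N x - t + z.2))
          ((tauC ℓ)^[nOf ℓ f x (birkC ℓ f N x - t + z.2)] x) - t) = z) := by
    intro x hx
    obtain ⟨hA, hB, hjN⟩ := hJ x hx
    set j := nOf ℓ f x (birkC ℓ f N x - t + z.2) with hjdef
    apply (mem_P_iff h0 hfb1 hz0 hz1 _).2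
    refine ⟨N - j, ?_, ?_, ?_, ?_⟩
    · show (tauC ℓ)^[N - j] ((tauC ℓ)^[j] x) = z.1
      rw [← hiter x j hjN, hx]
    · rfl
    · rw [hsplit x j hjN]; linarith
    · rw [hsplit x j hjN]
      rw [birk_succ] at hB
      show birkC ℓ f N x - birkC ℓ f j x < t - z.2 + f ((tauC ℓ)^[j] x)
      linarith
  -- the fiber characterization
  have hfibiff : ∀ x : S1, (hx : (tauC ℓ)^[N] x = z.1) → ∀ w : S1 × ℝ,
      (hw : w ∈ Xf ℓ f ∧ Tf ℓ f t w = z) →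
      (((tauC ℓ)^[nOf ℓ f x (birkC ℓ f N x - t + z.2)] x,
        z.2 + birkC ℓ f (N - nOf ℓ f x (birkC ℓ f N x - t + z.2))
          ((tauC ℓ)^[nOf ℓ f x (birkC ℓ f N x - t + z.2)] x) - t) = w ↔
        (tauC ℓ)^[N - nOf ℓ f w.1 (w.2 + t)] x = w.1) := by
    intro x hx w hw
    obtain ⟨hτw, hyw, hgew, hltw⟩ := hlvl w hw
    obtain ⟨hn1w, hnNw⟩ := hlvlN w hw
    set n := nOf ℓ f w.1 (w.2 + t) with hndef
    constructor
    · intro hΦ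
      -- from hΦ : Phi0 x = w, we get w.1 = τ^[j] x and the level of w equals N - j
      obtain ⟨hA, hB, hjN⟩ := hJ x hx
      set j := nOf ℓ f x (birkC ℓ f N x - t + z.2) with hjdef
      have hw1 : (tauC ℓ)^[j] x = w.1 := congrArg Prod.fst hΦ
      have hw2 : z.2 + birkC ℓ f (N - j) ((tauC ℓ)^[j] x) - t = w.2 := congrArg Prod.snd hΦ
      have hnj : n = N - j := by
        rw [hndef, ← hw1, ← hw2]
        have harg : z.2 + birkC ℓ f (N - j) ((tauC ℓ)^[j] x) - t + t
            = z.2 + birkC ℓ f (N - j) ((tauC ℓ)^[j] x) := by ring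
        rw [harg]
        exact nOf_shift h0 hfb1 hz0 hz1 (by rw [← hiter x j hjN, hx])
      rw [hnj, Nat.sub_sub_self hjN, hw1]
    · intro hx2
      obtain ⟨hA, hB, hjN⟩ := hJ x hx
      have hj : nOf ℓ f x (birkC ℓ f N x - t + z.2) = N - n := by
        apply nOf_eq ℓ f hpos
        · have h := birk_add ℓ f (N - n) n x
          rw [Nat.sub_add_cancel hnNw, hx2] at h
          -- h : birkC N x = birkC (N-n) x + birkC n w.1
          linarith
        · rw [birk_succ, hx2]
          have h := birk_add ℓ f (N - n) n x
          rw [Nat.sub_add_cancel hnNw, hx2] at h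
          linarith
      rw [hj, Nat.sub_sub_self hnNw, hx2]
      rw [Prod.ext_iff]
      exact ⟨rfl, by rw [← hyw]⟩
  -- put together: Φ as a map between subtypes
  obtain ⟨hVfin, hVcard⟩ := tau_fiber ℓ hℓ0 N z.1
  haveI : Finite {x : S1 // (tauC ℓ)^[N] x = z.1} := hVfin
  let Φ : {x : S1 // (tauC ℓ)^[N] x = z.1} → {w : S1 × ℝ // w ∈ Xf ℓ f ∧ Tf ℓ f t w = z} :=
    fun x => ⟨_, hΦmem x.1 x.2⟩
  -- fiber cardinalities
  have hfibeq : ∀ w : {w : S1 × ℝ // w ∈ Xf ℓ f ∧ Tf ℓ f t w = z},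
      Nat.card {x : {x : S1 // (tauC ℓ)^[N] x = z.1} // Φ x = w}
        = ℓ ^ (N - nOf ℓ f w.1.1 (w.1.2 + t)) ∧
      Finite {x : {x : S1 // (tauC ℓ)^[N] x = z.1} // Φ x = w} := by
    intro w
    have e1 : {x : {x : S1 // (tauC ℓ)^[N] x = z.1} // Φ x = w} ≃
        {x : {x : S1 // (tauC ℓ)^[N] x = z.1} //
          (tauC ℓ)^[N - nOf ℓ f w.1.1 (w.1.2 + t)] x.1 = w.1.1} :=
      Equiv.subtypeEquivRight fun x => by
        rw [Subtype.ext_iff]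
        exact hfibiff x.1 x.2 w.1 w.2
    have e2 : {x : {x : S1 // (tauC ℓ)^[N] x = z.1} //
          (tauC ℓ)^[N - nOf ℓ f w.1.1 (w.1.2 + t)] x.1 = w.1.1} ≃
        {x : S1 // (tauC ℓ)^[N - nOf ℓ f w.1.1 (w.1.2 + t)] x = w.1.1} :=
      @Equiv.subtypeSubtypeEquivSubtype S1 (fun x => (tauC ℓ)^[N] x = z.1)
        (fun x => (tauC ℓ)^[N - nOf ℓ f w.1.1 (w.1.2 + t)] x = w.1.1) <| by
        intro x hx
        have hnN := (hlvlN w.1 w.2).2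
        rw [← Nat.add_sub_cancel' hnN, Function.iterate_add_apply, hx]
        exact (hlvl w.1 w.2).1
    obtain ⟨hfin, hcard⟩ := tau_fiber ℓ hℓ0 (N - nOf ℓ f w.1.1 (w.1.2 + t)) w.1.1
    refine ⟨?_, ?_⟩
    · rw [Nat.card_congr (e1.trans e2), hcard]
    · exact Finite.of_equiv _ (e1.trans e2).symm
  -- surjectivity, hence finiteness of P
  have hsurj : Function.Surjective Φ := by
    intro w
    have h1 := (hfibeq w).1
    have h2 := (hfibeq w).2
    have hpos' : Nat.card {x : {x : S1 // (tauC ℓ)^[N] x = z.1} // Φ x = w} ≠ 0 := by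
      rw [h1]; exact (pow_pos hℓ0 _).ne'
    have hne : Nonempty {x : {x : S1 // (tauC ℓ)^[N] x = z.1} // Φ x = w} := by
      by_contra h
      rw [not_nonempty_iff] at h
      exact hpos' Nat.card_of_isEmpty
    obtain ⟨x⟩ := hne
    exact ⟨x.1, x.2⟩
  haveI hPfin : Finite {w : S1 × ℝ // w ∈ Xf ℓ f ∧ Tf ℓ f t w = z} :=
    Finite.of_surjective Φ hsurj
  haveI : Fintype {w : S1 × ℝ // w ∈ Xf ℓ f ∧ Tf ℓ f t w = z} := Fintype.ofFinite _
  haveI : Fintype {x : S1 // (tauC ℓ)^[N] x = z.1} := Fintype.ofFinite _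
  -- sum over fibers
  have hsum : ℓ ^ N = ∑ w : {w : S1 × ℝ // w ∈ Xf ℓ f ∧ Tf ℓ f t w = z},
      Nat.card {x : {x : S1 // (tauC ℓ)^[N] x = z.1} // Φ x = w} := by
    have e := Nat.card_congr (Equiv.sigmaFiberEquiv Φ)
    rw [← hVcard, ← e, Nat.card_eq_fintype_card, Fintype.card_sigma]
    exact Finset.sum_congr rfl fun w _ => Nat.card_eq_fintype_card.symm
  -- upper bound
  have hub : Nat.card {w : S1 × ℝ // w ∈ Xf ℓ f ∧ Tf ℓ f t w = z} ≤ ℓ ^ N := by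
    have h1' : (∑ _w : {w : S1 × ℝ // w ∈ Xf ℓ f ∧ Tf ℓ f t w = z}, 1) ≤
        ∑ w : {w : S1 × ℝ // w ∈ Xf ℓ f ∧ Tf ℓ f t w = z},
          Nat.card {x : {x : S1 // (tauC ℓ)^[N] x = z.1} // Φ x = w} :=
      Finset.sum_le_sum fun w _ => by
        rw [(hfibeq w).1]; exact Nat.one_le_iff_ne_zero.2 (pow_pos hℓ0 _).ne'
    rw [← hsum] at h1'
    simpa [Nat.card_eq_fintype_card] using h1'
  -- lower bound
  have hlb : ℓ ^ n₁ ≤ Nat.card {w : S1 × ℝ // w ∈ Xf ℓ f ∧ Tf ℓ f t w = z} := by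
    have hstep : (ℓ : ℕ) ^ N ≤
        Nat.card {w : S1 × ℝ // w ∈ Xf ℓ f ∧ Tf ℓ f t w = z} * ℓ ^ (N - n₁) := by
      rw [hsum]
      calc (∑ w : {w : S1 × ℝ // w ∈ Xf ℓ f ∧ Tf ℓ f t w = z},
            Nat.card {x : {x : S1 // (tauC ℓ)^[N] x = z.1} // Φ x = w})
          ≤ ∑ _w : {w : S1 × ℝ // w ∈ Xf ℓ f ∧ Tf ℓ f t w = z}, ℓ ^ (N - n₁) := by
            refine Finset.sum_le_sum fun w _ => ?_
            rw [(hfibeq w).1]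
            exact Nat.pow_le_pow_right (by omega)
              (Nat.sub_le_sub_left (hlvlN w.1 w.2).1 N)
        _ = Nat.card {w : S1 × ℝ // w ∈ Xf ℓ f ∧ Tf ℓ f t w = z} * ℓ ^ (N - n₁) := by
            rw [Finset.sum_const, smul_eq_mul, Finset.card_univ,
              Nat.card_eq_fintype_card]
    have hNsplit : ℓ ^ n₁ * ℓ ^ (N - n₁) = ℓ ^ N := by
      rw [← pow_add, Nat.add_sub_cancel' hn1N]
    have : ℓ ^ n₁ * ℓ ^ (N - n₁) ≤
        Nat.card {w : S1 × ℝ // w ∈ Xf ℓ f ∧ Tf ℓ f t w = z} * ℓ ^ (N - n₁) := by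
      rw [hNsplit]; exact hstep
    exact Nat.le_of_mul_le_mul_right this (pow_pos hℓ0 _)
  refine ⟨Set.finite_coe_iff.mp hPfin, ?_, hub⟩
  have hge1 : (1 : ℝ) ≤ (ℓ : ℝ) := by exact_mod_cast Nat.one_le_of_lt hℓ
  calc (ℓ : ℝ) ^ ((t - ymax) / ymax)
      ≤ (ℓ : ℝ) ^ ((n₁ : ℕ) : ℝ) :=
        Real.rpow_le_rpow_of_exponent_le hge1 (Nat.le_ceil _)
    _ = ((ℓ ^ n₁ : ℕ) : ℝ) := by rw [Real.rpow_natCast]; push_cast; ring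
    _ ≤ (Nat.card {w : S1 × ℝ // w ∈ Xf ℓ f ∧ Tf ℓ f t w = z} : ℝ) := by
        exact_mod_cast hlb
end
end

section
/- Let K ≥ q ≥ 1 be integers, r > 1 and σ > 0. There exists C > 0 (depending only on K, q, r, σ and χ) with the following property. Let Φ = (Φ₁,…,Φ_q) : ℝ^K → ℝ^q be an affine map and suppose there are distinct indices k(1), …, k(q) ∈ {1,…,K} such that the q×q matrix with entries ∂Φ_j/∂s_{k(j′)} has |determinant| ≥ 1. Then for every real λ ≥ 1 and every ξ = (ξ₁,…,ξ_q) ∈ ℝ^q: ∫_{[−σ,σ]^K} ∏_{j=1}^q ⟨λ·|ξ_j − Φ_j(s)|⟩^{−r} ds ≤ C·λ^{−q}. -/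
noncomputable section
open MeasureTheory ENNReal

/-- The "Japanese bracket" `⟨s⟩ = χ(|s|) + (1 - χ(|s|))|s|` associated to the cutoff `χ`. -/
def jb (χ : ℝ → ℝ) (s : ℝ) : ℝ := χ |s| + (1 - χ |s|) * |s|



lemma jb_lower {χ : ℝ → ℝ} (hχ01 : ∀ t, 0 ≤ χ t ∧ χ t ≤ 1)
    (hχ1 : ∀ t : ℝ, t ≤ 1 → χ t = 1) (hχ2 : ∀ t : ℝ, 2 ≤ t → χ t = 0)
    {t : ℝ} (ht : 0 ≤ t) : (1 + t) / 3 ≤ jb χ t := by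
  have habs : |t| = t := abs_of_nonneg ht
  rw [jb, habs]
  rcases le_or_gt t 2 with h2 | h2
  · have h1 : 1 ≤ χ t + (1 - χ t) * t := by
      rcases le_or_gt t 1 with h1 | h1
      · rw [hχ1 t h1]; ring_nf; norm_num
      · have := (hχ01 t).1
        have := (hχ01 t).2
        nlinarith
    linarith
  · rw [hχ2 t (by linarith)]
    ring_nf
    linarith

lemma jb_rpow_le {χ : ℝ → ℝ} (hχ01 : ∀ t, 0 ≤ χ t ∧ χ t ≤ 1)
    (hχ1 : ∀ t : ℝ, t ≤ 1 → χ t = 1) (hχ2 : ∀ t : ℝ, 2 ≤ t → χ t = 0)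
    {r : ℝ} (hr : 0 < r) {t : ℝ} (ht : 0 ≤ t) :
    jb χ t ^ (-r) ≤ 3 ^ r * (1 + t) ^ (-r) := by
  have h3 : (0:ℝ) < (1 + t) / 3 := by positivity
  have hjb := jb_lower hχ01 hχ1 hχ2 ht
  have h := Real.rpow_le_rpow_of_nonpos h3 hjb (neg_nonpos.mpr hr.le)
  refine h.trans_eq ?_
  rw [Real.div_rpow (by positivity) (by norm_num), Real.rpow_neg (by norm_num : (0:ℝ) ≤ 3),
    div_inv_eq_mul]
  ring

lemma jb_pos {χ : ℝ → ℝ} (hχ01 : ∀ t, 0 ≤ χ t ∧ χ t ≤ 1)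
    (hχ1 : ∀ t : ℝ, t ≤ 1 → χ t = 1) (hχ2 : ∀ t : ℝ, 2 ≤ t → χ t = 0)
    {t : ℝ} (ht : 0 ≤ t) : 0 < jb χ t :=
  lt_of_lt_of_le (by positivity) (jb_lower hχ01 hχ1 hχ2 ht)

lemma oneD_int {r : ℝ} (hr : 1 < r) {lam : ℝ} (hlam : 0 < lam) (b : ℝ) :
    Integrable (fun t : ℝ => (1 + |b - lam * t|) ^ (-r)) := by
  have hf0i : Integrable (fun u : ℝ => (1 + |u|) ^ (-r)) := by
    have := integrable_one_add_norm (E := ℝ) (μ := volume) (r := r) (by simpa using hr)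
    simpa [Real.norm_eq_abs] using this
  have hg : (fun x : ℝ => (1 + |b - x|) ^ (-r)) = fun x : ℝ => (1 + |x - b|) ^ (-r) := by
    funext x; rw [abs_sub_comm]
  have hgi : Integrable (fun x : ℝ => (1 + |b - x|) ^ (-r)) := by
    rw [hg]; exact hf0i.comp_sub_right b
  exact hgi.comp_mul_left' hlam.ne'

lemma oneD_val {r : ℝ} (hr : 1 < r) {lam : ℝ} (hlam : 0 < lam) (b : ℝ) :
    (∫ t : ℝ, (1 + |b - lam * t|) ^ (-r)) = lam⁻¹ * ∫ u : ℝ, (1 + |u|) ^ (-r) := by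
  have hg : (fun x : ℝ => (1 + |b - x|) ^ (-r)) = fun x : ℝ => (1 + |x - b|) ^ (-r) := by
    funext x; rw [abs_sub_comm]
  have h1 : (∫ t : ℝ, (1 + |b - lam * t|) ^ (-r))
      = |lam⁻¹| • ∫ x : ℝ, (1 + |b - x|) ^ (-r) :=
    Measure.integral_comp_mul_left (fun x : ℝ => (1 + |b - x|) ^ (-r)) lam
  rw [h1, hg, integral_sub_right_eq_self (μ := volume) (fun u : ℝ => (1 + |u|) ^ (-r)) b,
    abs_of_pos (inv_pos.mpr hlam), smul_eq_mul]

lemma qdim_lintegral {q : ℕ} {r : ℝ} (hr : 1 < r) {lam : ℝ} (hlam : 0 < lam) (a : Fin q → ℝ) :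
    (∫⁻ w : Fin q → ℝ, ∏ j, ENNReal.ofReal (3 ^ r * (1 + |lam * (a j - w j)|) ^ (-r)))
      = ENNReal.ofReal ((3 ^ r * (lam⁻¹ * ∫ u : ℝ, (1 + |u|) ^ (-r))) ^ q) := by
  set I0 := ∫ u : ℝ, (1 + |u|) ^ (-r) with hI0
  have hint : ∀ j : Fin q,
      Integrable (fun t : ℝ => 3 ^ r * (1 + |lam * a j - lam * t|) ^ (-r)) :=
    fun j => (oneD_int hr hlam (lam * a j)).const_mul _
  have hval : ∀ j : Fin q,
      (∫ t : ℝ, 3 ^ r * (1 + |lam * a j - lam * t|) ^ (-r)) = 3 ^ r * (lam⁻¹ * I0) := by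
    intro j; rw [MeasureTheory.integral_const_mul, oneD_val hr hlam]
  have step1 : (∫⁻ w : Fin q → ℝ, ∏ j, ENNReal.ofReal (3 ^ r * (1 + |lam * (a j - w j)|) ^ (-r)))
      = ∫⁻ w : Fin q → ℝ,
          ENNReal.ofReal (∏ j, 3 ^ r * (1 + |lam * a j - lam * w j|) ^ (-r)) := by
    refine lintegral_congr fun w => ?_
    rw [ENNReal.ofReal_prod_of_nonneg (fun j _ => by positivity)]
    refine Finset.prod_congr rfl fun j _ => ?_
    rw [mul_sub]
  rw [step1,
    ← ofReal_integral_eq_lintegral_ofReal (show Integrable _ volume from Integrable.fintype_prod (𝕜 := ℝ) hint)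
      (ae_of_all _ fun w => Finset.prod_nonneg fun j _ => by positivity),
    integral_fintype_prod_volume_eq_prod
      (f := fun j (t : ℝ) => 3 ^ r * (1 + |lam * a j - lam * t|) ^ (-r))]
  congr 1
  rw [Finset.prod_congr rfl fun j _ => hval j, Finset.prod_const, Finset.card_univ,
    Fintype.card_fin]

lemma cov_lintegral {q : ℕ} (M : Matrix (Fin q) (Fin q) ℝ) (hdet : 1 ≤ |M.det|)
    {W : (Fin q → ℝ) → ℝ≥0∞} (hW : Measurable W) :
    (∫⁻ u : Fin q → ℝ, W (Matrix.toLin' M u)) ≤ ∫⁻ w, W w := by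
  have hdet0 : M.det ≠ 0 := by
    intro h; rw [h] at hdet; simp at hdet; linarith
  have hL : Measurable (Matrix.toLin' M) :=
    (LinearMap.continuous_on_pi _).measurable
  rw [← lintegral_map hW hL, Real.map_matrix_volume_pi_eq_smul_volume_pi hdet0,
    lintegral_smul_measure]
  have h1 : ENNReal.ofReal (abs (M.det)⁻¹) ≤ 1 := by
    rw [ENNReal.ofReal_le_one, abs_inv]
    exact inv_le_one_of_one_le₀ hdet
  calc ENNReal.ofReal (abs (M.det)⁻¹) * ∫⁻ w, W w ≤ 1 * ∫⁻ w, W w := mul_le_mul_left h1 _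
    _ = ∫⁻ w, W w := one_mul _

/-- the key integral estimate over the parameter box. If the affine map
`Φ(s)_j = ∑_k A j k · s k + c j` admits distinct indices `k(1),…,k(q)` for which the corresponding
`q × q` minor of its linear part has `|det| ≥ 1`, then
`∫_{[-σ,σ]^K} ∏_j ⟨λ|ξ_j - Φ_j(s)|⟩^{-r} ds ≤ C λ^{-q}` uniformly in `λ ≥ 1` and `ξ`. -/
theorem stmt15 (χ : ℝ → ℝ) (hχs : ContDiff ℝ (⊤ : ℕ∞) χ)
    (hχ01 : ∀ t, 0 ≤ χ t ∧ χ t ≤ 1) (hχ1 : ∀ t : ℝ, t ≤ 1 → χ t = 1)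
    (hχ2 : ∀ t : ℝ, 2 ≤ t → χ t = 0)
    (K q : ℕ) (hq : 1 ≤ q) (hqK : q ≤ K) (r : ℝ) (hr : 1 < r) (σ : ℝ) (hσ : 0 < σ) :
    ∃ C > (0 : ℝ), ∀ (A : Matrix (Fin q) (Fin K) ℝ) (c : Fin q → ℝ) (ks : Fin q → Fin K),
      Function.Injective ks →
      1 ≤ |Matrix.det (Matrix.of fun j j' : Fin q => A j (ks j'))| →
      ∀ lam : ℝ, 1 ≤ lam → ∀ ξ : Fin q → ℝ,
        (∫ s in Set.univ.pi fun _ : Fin K => Set.Icc (-σ) σ,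
            ∏ j : Fin q, jb χ (lam * |ξ j - (∑ k, A j k * s k + c j)|) ^ (-r)) ≤
          C * lam ^ (-(q : ℝ)) := by
  classical
  have hr0 : (0:ℝ) < r := lt_trans one_pos hr
  have hχc : Continuous χ := hχs.continuous
  have hI0nn : (0:ℝ) ≤ ∫ u : ℝ, (1 + |u|) ^ (-r) :=
    integral_nonneg fun u => Real.rpow_nonneg (by positivity) _
  have h3r : (0:ℝ) ≤ (3:ℝ) ^ r := Real.rpow_nonneg (by norm_num) _
  have h31 : (0:ℝ) < 3 ^ r * (∫ u : ℝ, (1 + |u|) ^ (-r)) + 1 := by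
    nlinarith
  refine ⟨(3 ^ r * (∫ u : ℝ, (1 + |u|) ^ (-r)) + 1) ^ q * (1 + 2 * σ) ^ K,
    mul_pos (pow_pos h31 q) (pow_pos (by linarith) K), ?_⟩
  intro A c ks hks hdet lam hlam ξ
  have hlam0 : (0:ℝ) < lam := lt_of_lt_of_le one_pos hlam
  set M : Matrix (Fin q) (Fin q) ℝ := Matrix.of fun j j' => A j (ks j') with hM
  -- continuity facts
  have hjbc : Continuous (jb χ) := by
    unfold jb
    exact (hχc.comp continuous_abs).add
      ((continuous_const.sub (hχc.comp continuous_abs)).mul continuous_abs)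
  have hΦc : ∀ j : Fin q, Continuous fun s : Fin K → ℝ => ξ j - (∑ k, A j k * s k + c j) :=
    fun j => continuous_const.sub
      ((continuous_finset_sum _ fun k _ => continuous_const.mul (continuous_apply k)).add continuous_const)
  have hFc : Continuous fun s : Fin K → ℝ =>
      ∏ j, jb χ (lam * |ξ j - (∑ k, A j k * s k + c j)|) ^ (-r) := by
    refine continuous_finset_prod _ fun j _ => ?_
    refine Continuous.rpow_const (hjbc.comp (continuous_const.mul (hΦc j).abs))
      fun s => Or.inl ?_
    exact (jb_pos hχ01 hχ1 hχ2 (by positivity)).ne'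
  have hFnn : ∀ s : Fin K → ℝ,
      0 ≤ ∏ j, jb χ (lam * |ξ j - (∑ k, A j k * s k + c j)|) ^ (-r) :=
    fun s => Finset.prod_nonneg fun j _ => Real.rpow_nonneg
      (jb_pos hχ01 hχ1 hχ2 (by positivity)).le _
  set S : Set (Fin K → ℝ) := Set.univ.pi fun _ : Fin K => Set.Icc (-σ) σ with hS
  rw [integral_eq_lintegral_of_nonneg_ae (ae_of_all _ hFnn) hFc.aestronglyMeasurable.restrict]
  refine ENNReal.toReal_le_of_le_ofReal
    (mul_nonneg (mul_nonneg (pow_nonneg h31.le q) (pow_nonneg (by linarith) K))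
      (Real.rpow_nonneg hlam0.le _)) ?_
  -- the enlarged integrand
  set G : (Fin K → ℝ) → ℝ≥0∞ := fun s =>
    ∏ j, ENNReal.ofReal (3 ^ r * (1 + |lam * (ξ j - (∑ k, A j k * s k + c j))|) ^ (-r)) with hG
  have hGc : Measurable G := by
    rw [hG]
    refine Finset.measurable_prod _ fun j _ => ?_
    refine (ENNReal.continuous_ofReal.comp (continuous_const.mul ?_)).measurable
    refine Continuous.rpow_const
      (continuous_const.add ((continuous_const.mul (hΦc j)).abs)) fun s => Or.inl ?_
    positivity
  have hFG : ∀ s : Fin K → ℝ,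
      ENNReal.ofReal (∏ j, jb χ (lam * |ξ j - (∑ k, A j k * s k + c j)|) ^ (-r)) ≤ G s := by
    intro s
    rw [hG, ENNReal.ofReal_prod_of_nonneg
      (fun j _ => Real.rpow_nonneg (jb_pos hχ01 hχ1 hχ2 (by positivity)).le _)]
    refine Finset.prod_le_prod' fun j _ => ENNReal.ofReal_le_ofReal ?_
    have h := jb_rpow_le hχ01 hχ1 hχ2 hr0
      (t := lam * |ξ j - (∑ k, A j k * s k + c j)|) (by positivity)
    simpa [abs_mul, abs_of_pos hlam0] using h
  -- the reindexing equivalence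
  have hfin : Finite ↥((Set.range ks)ᶜ) := Subtype.finite
  let ι₂ : Type := ↥((Set.range ks)ᶜ)
  haveI : Fintype ι₂ := Fintype.ofFinite _
  let e : (ι₂ ⊕ Fin q) ≃ Fin K :=
    (Equiv.sumCongr (Equiv.refl ι₂) (Equiv.ofInjective ks hks)).trans
      ((Equiv.sumComm _ _).trans (Equiv.Set.sumCompl (Set.range ks)))
  have he1 : ∀ m : ι₂, e (Sum.inl m) = (m : Fin K) := by
    intro m; rfl
  have he2 : ∀ j : Fin q, e (Sum.inr j) = ks j := by
    intro j; rfl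
  let ψ : ((ι₂ → ℝ) × (Fin q → ℝ)) ≃ᵐ (Fin K → ℝ) :=
    (MeasurableEquiv.sumPiEquivProdPi fun _ : ι₂ ⊕ Fin q => ℝ).symm.trans
      (MeasurableEquiv.piCongrLeft (fun _ : Fin K => ℝ) e)
  have hψ : MeasurePreserving ψ volume volume :=
    ((volume_measurePreserving_piCongrLeft (fun _ : Fin K => ℝ) e).comp
      (volume_measurePreserving_sumPiEquivProdPi_symm (fun _ : ι₂ ⊕ Fin q => ℝ)))
  have hval1 : ∀ (v : ι₂ → ℝ) (u : Fin q → ℝ) (m : ι₂), ψ (v, u) (e (Sum.inl m)) = v m :=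
    fun v u m => Equiv.piCongrLeft_sumInl (fun _ : Fin K => ℝ) e v u m
  have hval2 : ∀ (v : ι₂ → ℝ) (u : Fin q → ℝ) (j : Fin q), ψ (v, u) (e (Sum.inr j)) = u j :=
    fun v u j => Equiv.piCongrLeft_sumInr (fun _ : Fin K => ℝ) e v u j
  have hsum : ∀ (v : ι₂ → ℝ) (u : Fin q → ℝ) (j : Fin q),
      (∑ k, A j k * ψ (v, u) k)
        = (∑ m : ι₂, A j (↑m) * v m) + ∑ j', A j (ks j') * u j' := by
    intro v u j
    rw [← Equiv.sum_comp e (fun k => A j k * ψ (v, u) k), Fintype.sum_sum_type]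
    congr 1
    · exact Finset.sum_congr rfl fun m _ => by rw [hval1 v u m, he1 m]
    · exact Finset.sum_congr rfl fun j' _ => by rw [hval2 v u j', he2 j']
  have hsub : ψ ⁻¹' S ⊆
      (Set.univ.pi fun _ : ι₂ => Set.Icc (-σ) σ) ×ˢ (Set.univ : Set (Fin q → ℝ)) := by
    rintro ⟨v, u⟩ hvu
    refine ⟨fun m _ => ?_, trivial⟩
    have h := hvu (e (Sum.inl m)) (Set.mem_univ _)
    rwa [hval1 v u m] at h
  have hMl : ∀ (u : Fin q → ℝ) (j : Fin q), Matrix.toLin' M u j = ∑ j', A j (ks j') * u j' := by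
    intro u j
    simp [hM, Matrix.toLin'_apply, Matrix.mulVec, dotProduct]
  -- inner bound
  have hinner : ∀ v : ι₂ → ℝ,
      (∫⁻ u : Fin q → ℝ, G (ψ (v, u)))
        ≤ ENNReal.ofReal ((3 ^ r * (lam⁻¹ * ∫ u : ℝ, (1 + |u|) ^ (-r))) ^ q) := by
    intro v
    have hrw : ∀ u : Fin q → ℝ, G (ψ (v, u))
        = ∏ j, ENNReal.ofReal (3 ^ r *
            (1 + |lam * ((fun j' => ξ j' - c j' - ∑ m : ι₂, A j' (↑m) * v m) j
              - Matrix.toLin' M u j)|) ^ (-r)) := by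
      intro u
      rw [hG]
      refine Finset.prod_congr rfl fun j _ => ?_
      have : ξ j - (∑ k, A j k * ψ (v, u) k + c j)
          = (ξ j - c j - ∑ m : ι₂, A j (↑m) * v m) - Matrix.toLin' M u j := by
        rw [hsum v u j, hMl u j]; ring
      rw [this]
    have hWm : Measurable fun w : Fin q → ℝ => ∏ j, ENNReal.ofReal (3 ^ r *
        (1 + |lam * ((fun j' => ξ j' - c j' - ∑ m : ι₂, A j' (↑m) * v m) j - w j)|) ^ (-r)) := by
      refine Finset.measurable_prod _ fun j _ => ?_
      refine (ENNReal.continuous_ofReal.comp (continuous_const.mul ?_)).measurable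
      refine Continuous.rpow_const
        (continuous_const.add ((continuous_const.mul
          (continuous_const.sub (continuous_apply j))).abs)) fun w => Or.inl ?_
      positivity
    calc (∫⁻ u : Fin q → ℝ, G (ψ (v, u)))
        = ∫⁻ u : Fin q → ℝ, (fun w : Fin q → ℝ => ∏ j, ENNReal.ofReal (3 ^ r *
            (1 + |lam * ((fun j' => ξ j' - c j' - ∑ m : ι₂, A j' (↑m) * v m) j - w j)|) ^ (-r)))
            (Matrix.toLin' M u) := lintegral_congr fun u => hrw u
      _ ≤ ∫⁻ w : Fin q → ℝ, ∏ j, ENNReal.ofReal (3 ^ r *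
            (1 + |lam * ((fun j' => ξ j' - c j' - ∑ m : ι₂, A j' (↑m) * v m) j - w j)|) ^ (-r)) :=
          cov_lintegral M hdet hWm
      _ = ENNReal.ofReal ((3 ^ r * (lam⁻¹ * ∫ u : ℝ, (1 + |u|) ^ (-r))) ^ q) :=
          qdim_lintegral hr hlam0 _
  -- volume of the small box
  have hvol : volume (Set.univ.pi fun _ : ι₂ => Set.Icc (-σ) σ)
      = ENNReal.ofReal ((2 * σ) ^ Fintype.card ι₂) := by
    rw [volume_pi_pi]
    rw [Finset.prod_congr rfl (fun m _ => by rw [Real.volume_Icc]), Finset.prod_const,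
      Finset.card_univ, ← ENNReal.ofReal_pow (by linarith)]
    congr 1
    ring
  have hcard : Fintype.card ι₂ ≤ K := by
    have h := Fintype.card_le_of_injective (fun m : ι₂ => (m : Fin K)) Subtype.val_injective
    simpa using h
  calc (∫⁻ s in S, ENNReal.ofReal
        (∏ j, jb χ (lam * |ξ j - (∑ k, A j k * s k + c j)|) ^ (-r)))
      ≤ ∫⁻ s in S, G s := lintegral_mono hFG
    _ = ∫⁻ x in ψ ⁻¹' S, G (ψ x) :=
        (hψ.setLIntegral_comp_preimage_emb ψ.measurableEmbedding G S).symm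
    _ ≤ ∫⁻ x in (Set.univ.pi fun _ : ι₂ => Set.Icc (-σ) σ) ×ˢ (Set.univ : Set (Fin q → ℝ)),
          G (ψ x) := lintegral_mono_set hsub
    _ = ∫⁻ v in (Set.univ.pi fun _ : ι₂ => Set.Icc (-σ) σ), ∫⁻ u, G (ψ (v, u)) := by
        rw [Measure.volume_eq_prod, ← Measure.prod_restrict, Measure.restrict_univ]
        exact lintegral_prod _ ((hGc.comp ψ.measurable).aemeasurable)
    _ ≤ ∫⁻ _ in (Set.univ.pi fun _ : ι₂ => Set.Icc (-σ) σ),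
          ENNReal.ofReal ((3 ^ r * (lam⁻¹ * ∫ u : ℝ, (1 + |u|) ^ (-r))) ^ q) :=
        lintegral_mono' le_rfl hinner
    _ = ENNReal.ofReal ((3 ^ r * (lam⁻¹ * ∫ u : ℝ, (1 + |u|) ^ (-r))) ^ q)
          * volume (Set.univ.pi fun _ : ι₂ => Set.Icc (-σ) σ) := setLIntegral_const _ _
    _ ≤ ENNReal.ofReal ((3 ^ r * (∫ u : ℝ, (1 + |u|) ^ (-r)) + 1) ^ q * (1 + 2 * σ) ^ K
          * lam ^ (-(q : ℝ))) := by
        rw [hvol, ← ENNReal.ofReal_mul (pow_nonneg (mul_nonneg h3r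
          (mul_nonneg (inv_nonneg.mpr hlam0.le) hI0nn)) q)]
        refine ENNReal.ofReal_le_ofReal ?_
        have hlq : lam ^ (-(q:ℝ)) = (lam⁻¹) ^ q := by
          rw [Real.rpow_neg hlam0.le, Real.rpow_natCast, inv_pow]
        calc (3 ^ r * (lam⁻¹ * ∫ u : ℝ, (1 + |u|) ^ (-r))) ^ q * (2 * σ) ^ Fintype.card ι₂
            = ((3 ^ r * ∫ u : ℝ, (1 + |u|) ^ (-r)) ^ q * (2 * σ) ^ Fintype.card ι₂)
                * (lam⁻¹) ^ q := by ring
          _ ≤ (((3 ^ r * ∫ u : ℝ, (1 + |u|) ^ (-r)) + 1) ^ q * (1 + 2 * σ) ^ K)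
                * (lam⁻¹) ^ q := by
              refine mul_le_mul_of_nonneg_right (mul_le_mul ?_ ?_ ?_ ?_)
                (pow_nonneg (inv_nonneg.mpr hlam0.le) q)
              · exact pow_le_pow_left₀ (mul_nonneg h3r hI0nn) (by linarith) q
              · calc (2*σ) ^ Fintype.card ι₂ ≤ (1 + 2*σ) ^ Fintype.card ι₂ :=
                    pow_le_pow_left₀ (by linarith) (by linarith) _
                  _ ≤ (1 + 2*σ) ^ K := pow_le_pow_right₀ (by linarith) hcard
              · exact pow_nonneg (by linarith) _
              · exact pow_nonneg h31.le q
          _ = ((3 ^ r * ∫ u : ℝ, (1 + |u|) ^ (-r)) + 1) ^ q * (1 + 2 * σ) ^ K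
                * lam ^ (-(q : ℝ)) := by rw [hlq]
end
end
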